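/- arXiv:2512.06260 — 6 statements merged into one kernel-verified Lean document; each statement's English description precedes it below -/
import Mathlib

section
/- Monotonicity of the reduction factor under refinement: let {S_k}_{k=1}^G and {S'_l}_{l=1}^{G'} be two partitions of [m] such that every S'_l is contained in some S_k (i.e., {S'_l} refines {S_k}). Then for any density matrix ρ, R[{S_k}; ρ] ≤ R[{S'_l}; ρ], where R[{S_k}; ρ] = Σ_k q_k tr[K_k† K_k ρ] with q_k = Σ_{i∈S_k} p_i and K_k = Σ_{i∈S_k}(p_i/q_k)U_i. -/
open Matrix
open scoped ComplexOrder

namespace Stmt4Aux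

/-- squared Frobenius norm -/
noncomputable def nn {n : ℕ} (B : Matrix (Fin n) (Fin n) ℂ) : ℝ :=
  ∑ i, ∑ j, ‖B i j‖ ^ 2

lemma nn_nonneg {n : ℕ} (B : Matrix (Fin n) (Fin n) ℂ) : 0 ≤ nn B :=
  Finset.sum_nonneg fun _ _ => Finset.sum_nonneg fun _ _ => sq_nonneg _

lemma trace_cT_mul_self {n : ℕ} (B : Matrix (Fin n) (Fin n) ℂ) :
    (Bᴴ * B).trace = ((nn B : ℝ) : ℂ) := by
  have : (Bᴴ * B).trace = ∑ j, ∑ i, (starRingEnd ℂ) (B i j) * B i j := by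
    simp [Matrix.trace, Matrix.diag, Matrix.mul_apply, Matrix.conjTranspose_apply]
  rw [this, Finset.sum_comm, nn]
  push_cast
  refine Finset.sum_congr rfl fun i _ => Finset.sum_congr rfl fun j _ => ?_
  rw [Complex.conj_mul']

noncomputable def toE {n : ℕ} (B : Matrix (Fin n) (Fin n) ℂ) :
    EuclideanSpace ℂ (Fin n × Fin n) :=
  WithLp.toLp 2 (fun ij : Fin n × Fin n => B ij.1 ij.2)

lemma norm_toE_sq {n : ℕ} (B : Matrix (Fin n) (Fin n) ℂ) : ‖toE B‖ ^ 2 = nn B := by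
  rw [EuclideanSpace.norm_eq, Real.sq_sqrt (Finset.sum_nonneg fun _ _ => sq_nonneg _)]
  rw [Fintype.sum_prod_type]
  rfl

lemma toE_sum {n : ℕ} {ι : Type*} (s : Finset ι) (B : ι → Matrix (Fin n) (Fin n) ℂ) :
    toE (∑ l ∈ s, B l) = ∑ l ∈ s, toE (B l) := by
  ext ij
  simp [toE, Matrix.sum_apply]

/-- Cauchy–Schwarz step -/
lemma cs_key {ι : Type*} (s : Finset ι) {E : Type*} [NormedAddCommGroup E]
    (v : ι → E) (w : ι → ℝ) (hw : ∀ l ∈ s, 0 < w l) :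
    ‖∑ l ∈ s, v l‖ ^ 2 ≤ (∑ l ∈ s, w l) * ∑ l ∈ s, ‖v l‖ ^ 2 / w l := by
  have h2 : ‖∑ l ∈ s, v l‖ ^ 2 ≤ (∑ l ∈ s, ‖v l‖) ^ 2 :=
    pow_le_pow_left₀ (norm_nonneg _) (norm_sum_le _ _) 2
  refine h2.trans ?_
  have h3 : ∑ l ∈ s, ‖v l‖ = ∑ l ∈ s, Real.sqrt (w l) * (‖v l‖ / Real.sqrt (w l)) := by
    refine Finset.sum_congr rfl fun l hl => ?_
    have : Real.sqrt (w l) ≠ 0 := ne_of_gt (Real.sqrt_pos.mpr (hw l hl))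
    field_simp
  rw [h3]
  have h4 := Finset.sum_mul_sq_le_sq_mul_sq s (fun l => Real.sqrt (w l))
    (fun l => ‖v l‖ / Real.sqrt (w l))
  refine h4.trans_eq ?_
  congr 1
  · exact Finset.sum_congr rfl fun l hl => Real.sq_sqrt (hw l hl).le
  · refine Finset.sum_congr rfl fun l hl => ?_
    rw [div_pow, Real.sq_sqrt (hw l hl).le]

lemma term_eq {n m : ℕ} (p : Fin m → ℝ) (U : Fin m → Matrix (Fin n) (Fin n) ℂ)
    (T : Finset (Fin m)) (c : ℝ) (hc : 0 < c)
    (ρ s0 : Matrix (Fin n) (Fin n) ℂ) (hs : s0 * s0 = ρ) (hsH : s0ᴴ = s0) :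
    (c : ℂ) * ((∑ i ∈ T, ((p i / c : ℝ) : ℂ) • U i)ᴴ *
        (∑ i ∈ T, ((p i / c : ℝ) : ℂ) • U i) * ρ).trace
      = ((nn ((∑ i ∈ T, ((p i : ℝ) : ℂ) • U i) * s0) / c : ℝ) : ℂ) := by
  set Amat : Matrix (Fin n) (Fin n) ℂ := ∑ i ∈ T, ((p i : ℝ) : ℂ) • U i with hAmat
  have hc0 : (c : ℂ) ≠ 0 := by exact_mod_cast ne_of_gt hc
  have hKA : (∑ i ∈ T, ((p i / c : ℝ) : ℂ) • U i) = (((c⁻¹ : ℝ)) : ℂ) • Amat := by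
    rw [hAmat, Finset.smul_sum]
    refine Finset.sum_congr rfl fun i _ => ?_
    rw [smul_smul]
    congr 1
    push_cast
    ring
  rw [hKA]
  rw [Matrix.conjTranspose_smul]
  have hstar : star (((c⁻¹ : ℝ)) : ℂ) = (((c⁻¹ : ℝ)) : ℂ) := by
    simp [Complex.star_def, Complex.conj_ofReal]
  rw [hstar]
  rw [Matrix.smul_mul, Matrix.mul_smul, Matrix.smul_mul, Matrix.smul_mul,
    Matrix.trace_smul, Matrix.trace_smul]
  have htr : (Amatᴴ * Amat * ρ).trace = ((nn (Amat * s0) : ℝ) : ℂ) := by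
    rw [← hs]
    have h1 : Amatᴴ * Amat * (s0 * s0) = (Amatᴴ * (Amat * s0)) * s0 := by
      noncomm_ring
    rw [h1, Matrix.trace_mul_comm, ← Matrix.mul_assoc]
    have h2 : s0 * Amatᴴ = (Amat * s0)ᴴ := by
      rw [Matrix.conjTranspose_mul, hsH]
    rw [h2, trace_cT_mul_self]
  rw [htr]
  rw [smul_eq_mul, smul_eq_mul]
  push_cast
  field_simp

lemma exists_sqrt' {n : ℕ} (ρ : Matrix (Fin n) (Fin n) ℂ) (hρ : ρ.PosSemidef) :
    ∃ s0 : Matrix (Fin n) (Fin n) ℂ, s0 * s0 = ρ ∧ s0ᴴ = s0 := by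
  open scoped MatrixOrder in
  exact ⟨CFC.sqrt ρ, CFC.sqrt_mul_sqrt_self ρ hρ.nonneg, (CFC.sqrt_nonneg ρ).posSemidef.1⟩

end Stmt4Aux

open Stmt4Aux

/-- monotonicity of the reduction factor under refinement: if every group
`S' l` of one partition is contained in some group `S k` of another, then
`R[{S_k}; ρ] ≤ R[{S'_l}; ρ]`. -/
theorem stmt_4 {n m G G' : ℕ}
    (p : Fin m → ℝ) (hp : ∀ i, 0 < p i) (hps : ∑ i, p i = 1)
    (U : Fin m → Matrix (Fin n) (Fin n) ℂ)
    (hU : ∀ i, U i ∈ Matrix.unitaryGroup (Fin n) ℂ)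
    (S : Fin G → Finset (Fin m))
    (hSdisj : ∀ k l, k ≠ l → Disjoint (S k) (S l))
    (hScover : ∀ i, ∃ k, i ∈ S k)
    (hSne : ∀ k, (S k).Nonempty)
    (S' : Fin G' → Finset (Fin m))
    (hS'disj : ∀ k l, k ≠ l → Disjoint (S' k) (S' l))
    (hS'cover : ∀ i, ∃ k, i ∈ S' k)
    (hS'ne : ∀ k, (S' k).Nonempty)
    (hrefine : ∀ l, ∃ k, S' l ⊆ S k)
    (q : Fin G → ℝ) (hq : ∀ k, q k = ∑ i ∈ S k, p i)
    (K : Fin G → Matrix (Fin n) (Fin n) ℂ)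
    (hK : ∀ k, K k = ∑ i ∈ S k, ((p i / q k : ℝ) : ℂ) • U i)
    (q' : Fin G' → ℝ) (hq' : ∀ l, q' l = ∑ i ∈ S' l, p i)
    (K' : Fin G' → Matrix (Fin n) (Fin n) ℂ)
    (hK' : ∀ l, K' l = ∑ i ∈ S' l, ((p i / q' l : ℝ) : ℂ) • U i)
    (ρ : Matrix (Fin n) (Fin n) ℂ) (hρ : ρ.PosSemidef) (hρtr : ρ.trace = 1) :
    (∑ k, (q k : ℂ) * ((K k)ᴴ * K k * ρ).trace)
      ≤ ∑ l, (q' l : ℂ) * ((K' l)ᴴ * K' l * ρ).trace := by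
  -- setup
  obtain ⟨s0, hs, hsH⟩ := exists_sqrt' ρ hρ
  set A : Fin G → Matrix (Fin n) (Fin n) ℂ :=
    fun k => ∑ i ∈ S k, ((p i : ℝ) : ℂ) • U i with hA
  set A' : Fin G' → Matrix (Fin n) (Fin n) ℂ :=
    fun l => ∑ i ∈ S' l, ((p i : ℝ) : ℂ) • U i with hA'
  have hqpos : ∀ k, 0 < q k := fun k => by
    rw [hq]; exact Finset.sum_pos (fun i _ => hp i) (hSne k)
  have hq'pos : ∀ l, 0 < q' l := fun l => by
    rw [hq']; exact Finset.sum_pos (fun i _ => hp i) (hS'ne l)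
  -- rewrite both sides as real numbers
  have hL : ∀ k, (q k : ℂ) * ((K k)ᴴ * K k * ρ).trace
      = ((nn (A k * s0) / q k : ℝ) : ℂ) := fun k => by
    rw [hK k]; exact term_eq p U (S k) (q k) (hqpos k) ρ s0 hs hsH
  have hR : ∀ l, (q' l : ℂ) * ((K' l)ᴴ * K' l * ρ).trace
      = ((nn (A' l * s0) / q' l : ℝ) : ℂ) := fun l => by
    rw [hK' l]; exact term_eq p U (S' l) (q' l) (hq'pos l) ρ s0 hs hsH
  simp only [hL, hR]
  rw [← Complex.ofReal_sum, ← Complex.ofReal_sum, Complex.real_le_real]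
  -- the real inequality
  choose σ hσ using hrefine
  have hSeq : ∀ k, S k = (Finset.univ.filter (fun l => σ l = k)).biUnion S' := by
    intro k
    ext i
    simp only [Finset.mem_biUnion, Finset.mem_filter, Finset.mem_univ, true_and]
    constructor
    · intro hi
      obtain ⟨l, hl⟩ := hS'cover i
      have hk : σ l = k := by
        by_contra hne
        exact (Finset.disjoint_left.mp (hSdisj _ _ hne)) (hσ l hl) hi
      exact ⟨l, hk, hl⟩
    · rintro ⟨l, rfl, hl⟩
      exact hσ l hl
  have hdisj : ∀ k, (↑(Finset.univ.filter (fun l => σ l = k)) : Set (Fin G')).PairwiseDisjoint S' :=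
    fun k a _ b _ hab => hS'disj a b hab
  have hq_split : ∀ k, q k = ∑ l ∈ Finset.univ.filter (fun l => σ l = k), q' l := by
    intro k
    rw [hq, hSeq k, Finset.sum_biUnion (hdisj k)]
    exact Finset.sum_congr rfl fun l _ => (hq' l).symm
  have hA_split : ∀ k, A k = ∑ l ∈ Finset.univ.filter (fun l => σ l = k), A' l := by
    intro k
    show (∑ i ∈ S k, ((p i : ℝ) : ℂ) • U i) = _
    rw [hSeq k]
    exact Finset.sum_biUnion (hdisj k)
  rw [← Finset.sum_fiberwise Finset.univ σ (fun l => nn (A' l * s0) / q' l)]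
  refine Finset.sum_le_sum fun k _ => ?_
  rw [div_le_iff₀ (hqpos k)]
  have e1 : nn (A k * s0)
      = ‖∑ l ∈ Finset.univ.filter (fun l => σ l = k), toE (A' l * s0)‖ ^ 2 := by
    rw [← toE_sum, norm_toE_sq, hA_split k, Finset.sum_mul]
  have e2 := cs_key (Finset.univ.filter (fun l => σ l = k))
    (fun l => toE (A' l * s0)) q' (fun l _ => hq'pos l)
  rw [e1]
  refine e2.trans_eq ?_
  rw [← hq_split k, mul_comm]
  congr 1
  exact Finset.sum_congr rfl fun l _ => by rw [norm_toE_sq]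
end

section
/- Exact splitting identity for the reduction factor: suppose S_G is split into disjoint nonempty subsets S_A, S_B with S_A ∪ S_B = S_G. Let q_A = Σ_{i∈S_A} p_i, q_B = Σ_{i∈S_B} p_i, K_A = Σ_{i∈S_A}(p_i/q_A)U_i, K_B = Σ_{i∈S_B}(p_i/q_B)U_i, and O an observable. Then R^O[{S_k}_{k=1}^{G-1} ∪ {S_A,S_B}; ρ] − R^O[{S_k}_{k=1}^G; ρ] = (q_A q_B/(q_A+q_B)) · tr[(O K_A − O K_B)† (O K_A − O K_B) ρ] ≥ 0, where R^O[{S_k};ρ] = Σ_k q_k tr[O² K_k ρ K_k†]. -/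
open Matrix
open scoped ComplexOrder

lemma stmt5_tr_helper {n : ℕ} (O X Y ρ : Matrix (Fin n) (Fin n) ℂ) (hO : O.IsHermitian) :
    ((O*X)ᴴ * (O*Y) * ρ).trace = (O^2 * (Y*ρ*Xᴴ)).trace := by
  rw [conjTranspose_mul, hO.eq, pow_two,
    show Xᴴ*O*(O*Y)*ρ = Xᴴ*(O*O*(Y*ρ)) from by noncomm_ring,
    trace_mul_comm, mul_assoc, mul_assoc, mul_assoc]

lemma stmt5_trace_nonneg {n : ℕ} {M : Matrix (Fin n) (Fin n) ℂ} (h : M.PosSemidef) :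
    0 ≤ M.trace := by
  rw [Matrix.trace]
  apply Finset.sum_nonneg; intro i _
  exact h.diag_nonneg

set_option maxHeartbeats 1000000 in
/-- exact splitting identity for the reduction factor
`R^O[{S_k}; ρ] = ∑ k, q k tr[O² K k ρ K kᴴ]`: splitting the group `S g` into
`S_A ∪ S_B` increases `R^O` by exactly
`(q_A q_B/(q_A+q_B)) tr[(O K_A − O K_B)ᴴ (O K_A − O K_B) ρ] ≥ 0`. -/
theorem stmt_5 {n m G : ℕ}
    (p : Fin m → ℝ) (hp : ∀ i, 0 < p i) (hps : ∑ i, p i = 1)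
    (U : Fin m → Matrix (Fin n) (Fin n) ℂ)
    (hU : ∀ i, U i ∈ Matrix.unitaryGroup (Fin n) ℂ)
    (S : Fin G → Finset (Fin m))
    (hSdisj : ∀ k l, k ≠ l → Disjoint (S k) (S l))
    (hScover : ∀ i, ∃ k, i ∈ S k)
    (hSne : ∀ k, (S k).Nonempty)
    (g : Fin G) (hSg : 2 ≤ (S g).card)
    (SA SB : Finset (Fin m)) (hABdisj : Disjoint SA SB)
    (hAne : SA.Nonempty) (hBne : SB.Nonempty) (hABunion : SA ∪ SB = S g)
    (q : Fin G → ℝ) (hq : ∀ k, q k = ∑ i ∈ S k, p i)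
    (K : Fin G → Matrix (Fin n) (Fin n) ℂ)
    (hK : ∀ k, K k = ∑ i ∈ S k, ((p i / q k : ℝ) : ℂ) • U i)
    (qA qB : ℝ) (hqA : qA = ∑ i ∈ SA, p i) (hqB : qB = ∑ i ∈ SB, p i)
    (KA KB : Matrix (Fin n) (Fin n) ℂ)
    (hKA : KA = ∑ i ∈ SA, ((p i / qA : ℝ) : ℂ) • U i)
    (hKB : KB = ∑ i ∈ SB, ((p i / qB : ℝ) : ℂ) • U i)
    (O : Matrix (Fin n) (Fin n) ℂ) (hO : O.IsHermitian)
    (ρ : Matrix (Fin n) (Fin n) ℂ) (hρ : ρ.PosSemidef) (hρtr : ρ.trace = 1) :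
    ((∑ k ∈ Finset.univ.erase g, (q k : ℂ) * (O ^ 2 * (K k * ρ * (K k)ᴴ)).trace)
        + (qA : ℂ) * (O ^ 2 * (KA * ρ * KAᴴ)).trace
        + (qB : ℂ) * (O ^ 2 * (KB * ρ * KBᴴ)).trace)
      - (∑ k, (q k : ℂ) * (O ^ 2 * (K k * ρ * (K k)ᴴ)).trace)
      = ((qA * qB / (qA + qB) : ℝ) : ℂ) *
          ((O * KA - O * KB)ᴴ * (O * KA - O * KB) * ρ).trace ∧
    0 ≤ ((qA * qB / (qA + qB) : ℝ) : ℂ) *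
          ((O * KA - O * KB)ᴴ * (O * KA - O * KB) * ρ).trace := by
  have hqApos : 0 < qA := hqA ▸ Finset.sum_pos (fun i _ => hp i) hAne
  have hqBpos : 0 < qB := hqB ▸ Finset.sum_pos (fun i _ => hp i) hBne
  have hqg : q g = qA + qB := by
    rw [hq, ← hABunion, Finset.sum_union hABdisj, hqA, hqB]
  have hABC : (qA : ℂ) + (qB : ℂ) ≠ 0 := by
    rw [← Complex.ofReal_add]
    exact_mod_cast (by positivity : (0:ℝ) < qA + qB).ne'
  set cA : ℂ := ((qA / (qA + qB) : ℝ) : ℂ) with hcA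
  set cB : ℂ := ((qB / (qA + qB) : ℝ) : ℂ) with hcB
  have hcA' : cA = (qA:ℂ) / ((qA:ℂ) + qB) := by rw [hcA]; push_cast; ring
  have hcB' : cB = (qB:ℂ) / ((qA:ℂ) + qB) := by rw [hcB]; push_cast; ring
  clear_value cA cB
  have hA' : ∀ i ∈ SA, ((p i / q g : ℝ) : ℂ) = cA * ((p i / qA : ℝ) : ℂ) := by
    intro i hi
    rw [hcA', hqg]; push_cast
    field_simp
  have hB' : ∀ i ∈ SB, ((p i / q g : ℝ) : ℂ) = cB * ((p i / qB : ℝ) : ℂ) := by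
    intro i hi
    rw [hcB', hqg]; push_cast
    field_simp
  have hKg : K g = cA • KA + cB • KB := by
    rw [hK g, ← hABunion, Finset.sum_union hABdisj, hKA, hKB, Finset.smul_sum,
      Finset.smul_sum]
    congr 1
    · exact Finset.sum_congr rfl fun i hi => by rw [hA' i hi, ← smul_smul]
    · exact Finset.sum_congr rfl fun i hi => by rw [hB' i hi, ← smul_smul]
  set a := (O ^ 2 * (KA * ρ * KAᴴ)).trace with ha
  set b := (O ^ 2 * (KA * ρ * KBᴴ)).trace with hb
  set c := (O ^ 2 * (KB * ρ * KAᴴ)).trace with hc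
  set d := (O ^ 2 * (KB * ρ * KBᴴ)).trace with hd
  clear_value a b c d
  have hTg : (O ^ 2 * (K g * ρ * (K g)ᴴ)).trace
      = cA*cA*a + cA*cB*b + cB*cA*c + cB*cB*d := by
    have hsA : (starRingEnd ℂ) cA = cA := by rw [hcA]; exact Complex.conj_ofReal _
    have hsB : (starRingEnd ℂ) cB = cB := by rw [hcB]; exact Complex.conj_ofReal _
    rw [hKg, ha, hb, hc, hd]
    simp only [hsA, hsB, conjTranspose_add, conjTranspose_smul, add_mul, mul_add,
      Matrix.smul_mul, Matrix.mul_smul, trace_add, trace_smul, smul_smul,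
      smul_eq_mul, Complex.star_def, Complex.conj_ofReal]
    ring
  have hRHS : ((O * KA - O * KB)ᴴ * (O * KA - O * KB) * ρ).trace
      = a - b - c + d := by
    simp only [conjTranspose_sub, sub_mul, mul_sub, trace_sub,
      stmt5_tr_helper O _ _ ρ hO]
    rw [ha, hb, hc, hd]; ring
  have hsum : (∑ k, (q k : ℂ) * (O ^ 2 * (K k * ρ * (K k)ᴴ)).trace)
      = ((q g : ℂ) * (O ^ 2 * (K g * ρ * (K g)ᴴ)).trace)
        + ∑ k ∈ Finset.univ.erase g, (q k : ℂ) * (O ^ 2 * (K k * ρ * (K k)ᴴ)).trace :=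
    (Finset.add_sum_erase _ _ (Finset.mem_univ g)).symm
  constructor
  · have hcoef : ((qA * qB / (qA + qB) : ℝ) : ℂ) = (qA:ℂ) * qB / ((qA:ℂ) + qB) := by
      push_cast; ring
    have hqgC : ((q g : ℝ) : ℂ) = (qA:ℂ) + qB := by rw [hqg]; push_cast; ring
    rw [hsum, hTg, hRHS, hqgC, hcoef, hcA', hcB']
    field_simp
    ring
  · apply mul_nonneg
    · rw [Complex.zero_le_real]
      positivity
    · rw [Matrix.trace_mul_cycle, Matrix.trace_mul_cycle]
      exact stmt5_trace_nonneg (hρ.mul_mul_conjTranspose_same (O * KA - O * KB))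
end

section
/- Split-subset upper bound for the reduction factor: with notation as above and O² ≤ ‖O²‖·I, if S_G is split into S_A and S_B, then R^O[{S_k}_{k=1}^{G-1} ∪ {S_A,S_B}; ρ] ≤ R^O[{S_k}_{k=1}^G; ρ] + 2‖O²‖ H(q_A,q_B), where H(a,b) = 2ab/(a+b) is the harmonic mean. -/
open Matrix
open scoped ComplexOrder

lemma aux_trace_nonneg {n : ℕ} {A : Matrix (Fin n) (Fin n) ℂ} (h : A.PosSemidef) :
    0 ≤ A.trace := by
  have hd : ∀ i, 0 ≤ A i i := by
    intro i
    simpa [mulVec_single, dotProduct, Pi.single_apply, Finset.sum_ite_eq] using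
      (posSemidef_iff_dotProduct_mulVec.mp h).2 (Pi.single i 1)
  exact Finset.sum_nonneg fun i _ => hd i

open scoped MatrixOrder Matrix.Norms.L2Operator in
lemma aux_trace_mul_nonneg {n : ℕ} {A B : Matrix (Fin n) (Fin n) ℂ}
    (hA : A.PosSemidef) (hB : B.PosSemidef) : 0 ≤ (A * B).trace := by
  obtain ⟨C, rfl⟩ := CStarAlgebra.nonneg_iff_eq_star_mul_self.mp hA.nonneg
  rw [Matrix.mul_assoc, Matrix.trace_mul_comm]
  have : (C * B * Cᴴ).PosSemidef := hB.mul_mul_conjTranspose_same C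
  exact aux_trace_nonneg this

lemma aux_smul_psd {n : ℕ} {A : Matrix (Fin n) (Fin n) ℂ} (c : ℝ) (hc : 0 ≤ c)
    (hA : A.PosSemidef) : ((c : ℂ) • A).PosSemidef := by
  constructor
  · rw [IsHermitian, conjTranspose_smul, hA.1.eq]
    congr 1
    simp [Complex.ext_iff]
  · intro x
    exact (hA.smul (a := (c : ℂ)) (by exact_mod_cast hc)).2 x

lemma aux_sum_psd {n : ℕ} {ι : Type*} (s : Finset ι) (f : ι → Matrix (Fin n) (Fin n) ℂ)
    (h : ∀ i ∈ s, (f i).PosSemidef) : (∑ i ∈ s, f i).PosSemidef := by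
  classical
  induction s using Finset.induction_on with
  | empty => simpa using Matrix.PosSemidef.zero
  | @insert a s' hx ih =>
    rw [Finset.sum_insert hx]
    exact (h a (Finset.mem_insert_self a s')).add
      (ih fun i hi => h i (Finset.mem_insert_of_mem hi))

lemma aux_contraction {m n : ℕ} (s : Finset (Fin m)) (c : Fin m → ℝ)
    (hc : ∀ i ∈ s, 0 ≤ c i) (hcs : ∑ i ∈ s, c i = 1)
    (U : Fin m → Matrix (Fin n) (Fin n) ℂ)
    (hU : ∀ i, U i ∈ Matrix.unitaryGroup (Fin n) ℂ) :
    ((1 : Matrix (Fin n) (Fin n) ℂ)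
      - (∑ i ∈ s, ((c i : ℝ) : ℂ) • U i)ᴴ * (∑ i ∈ s, ((c i : ℝ) : ℂ) • U i)).PosSemidef := by
  set K : Matrix (Fin n) (Fin n) ℂ := ∑ i ∈ s, ((c i : ℝ) : ℂ) • U i with hK
  have hσ : (∑ i ∈ s, ((c i : ℝ) : ℂ)) = 1 := by exact_mod_cast congrArg (Complex.ofReal) hcs
  have huu : ∀ i, (U i)ᴴ * U i = 1 := by
    intro i
    have h1 := (Unitary.mem_iff.mp (hU i)).1
    rwa [star_eq_conjTranspose] at h1
  have hKH : Kᴴ = ∑ i ∈ s, ((c i : ℝ) : ℂ) • (U i)ᴴ := by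
    rw [hK, conjTranspose_sum]
    refine Finset.sum_congr rfl fun i _ => ?_
    rw [conjTranspose_smul, Complex.star_def, Complex.conj_ofReal]
  have hKK : Kᴴ * K = ∑ i ∈ s, ∑ j ∈ s,
      (((c i : ℝ) : ℂ) * ((c j : ℝ) : ℂ)) • ((U i)ᴴ * U j) := by
    rw [hKH, hK, Finset.sum_mul]
    refine Finset.sum_congr rfl fun i _ => ?_
    rw [Finset.mul_sum]
    refine Finset.sum_congr rfl fun j _ => ?_
    rw [smul_mul_smul_comm]
  have hKK' : Kᴴ * K = ∑ i ∈ s, ∑ j ∈ s,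
      (((c i : ℝ) : ℂ) * ((c j : ℝ) : ℂ)) • ((U j)ᴴ * U i) := by
    rw [hKK, Finset.sum_comm]
    exact Finset.sum_congr rfl fun j _ => Finset.sum_congr rfl fun i _ => by rw [mul_comm]
  have hone : ∑ i ∈ s, ∑ j ∈ s, (((c i : ℝ) : ℂ) * ((c j : ℝ) : ℂ)) • (1 : Matrix (Fin n) (Fin n) ℂ)
      = 1 := by
    simp_rw [mul_smul, ← Finset.smul_sum, ← Finset.sum_smul, hσ, one_smul]
  have key : (1 : Matrix (Fin n) (Fin n) ℂ) - Kᴴ * K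
      = (((2 : ℝ)⁻¹ : ℝ) : ℂ) • ∑ i ∈ s, ∑ j ∈ s,
          ((c i * c j : ℝ) : ℂ) • ((U i - U j)ᴴ * (U i - U j)) := by
    have hterm : ∀ i ∈ s, ∀ j ∈ s, ((c i * c j : ℝ) : ℂ) • ((U i - U j)ᴴ * (U i - U j))
        = (((c i : ℝ) : ℂ) * ((c j : ℝ) : ℂ)) • (1 : Matrix (Fin n) (Fin n) ℂ)
          + (((c i : ℝ) : ℂ) * ((c j : ℝ) : ℂ)) • (1 : Matrix (Fin n) (Fin n) ℂ)
          - (((c i : ℝ) : ℂ) * ((c j : ℝ) : ℂ)) • ((U i)ᴴ * U j)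
          - (((c i : ℝ) : ℂ) * ((c j : ℝ) : ℂ)) • ((U j)ᴴ * U i) := by
      intro i _ j _
      rw [conjTranspose_sub, sub_mul, mul_sub, mul_sub, huu i, huu j]
      push_cast
      module
    rw [Finset.sum_congr rfl fun i hi => Finset.sum_congr rfl fun j hj => hterm i hi j hj]
    simp_rw [Finset.sum_sub_distrib, Finset.sum_add_distrib]
    rw [hone, ← hKK, ← hKK']
    push_cast
    module
  rw [key]
  refine aux_smul_psd _ (by norm_num) ?_
  refine aux_sum_psd _ _ fun i hi => aux_sum_psd _ _ fun j hj => ?_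
  exact aux_smul_psd _ (mul_nonneg (hc i hi) (hc j hj)) (posSemidef_conjTranspose_mul_self _)

/-- split-subset upper bound for the reduction factor: with
`O² ≤ ‖O²‖·I` (encoded by `nO` with `nO • 1 - O² ⪰ 0`), splitting `S g` into
`S_A, S_B` increases `R^O` by at most `2‖O²‖ H(q_A, q_B)` where `H` is the
harmonic mean. -/
theorem stmt_6 {n m G : ℕ}
    (p : Fin m → ℝ) (hp : ∀ i, 0 < p i) (hps : ∑ i, p i = 1)
    (U : Fin m → Matrix (Fin n) (Fin n) ℂ)
    (hU : ∀ i, U i ∈ Matrix.unitaryGroup (Fin n) ℂ)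
    (S : Fin G → Finset (Fin m))
    (hSdisj : ∀ k l, k ≠ l → Disjoint (S k) (S l))
    (hScover : ∀ i, ∃ k, i ∈ S k)
    (hSne : ∀ k, (S k).Nonempty)
    (g : Fin G) (hSg : 2 ≤ (S g).card)
    (SA SB : Finset (Fin m)) (hABdisj : Disjoint SA SB)
    (hAne : SA.Nonempty) (hBne : SB.Nonempty) (hABunion : SA ∪ SB = S g)
    (q : Fin G → ℝ) (hq : ∀ k, q k = ∑ i ∈ S k, p i)
    (K : Fin G → Matrix (Fin n) (Fin n) ℂ)
    (hK : ∀ k, K k = ∑ i ∈ S k, ((p i / q k : ℝ) : ℂ) • U i)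
    (qA qB : ℝ) (hqA : qA = ∑ i ∈ SA, p i) (hqB : qB = ∑ i ∈ SB, p i)
    (KA KB : Matrix (Fin n) (Fin n) ℂ)
    (hKA : KA = ∑ i ∈ SA, ((p i / qA : ℝ) : ℂ) • U i)
    (hKB : KB = ∑ i ∈ SB, ((p i / qB : ℝ) : ℂ) • U i)
    (O : Matrix (Fin n) (Fin n) ℂ) (hO : O.IsHermitian)
    (nO : ℝ) (hnO : ((nO : ℂ) • (1 : Matrix (Fin n) (Fin n) ℂ) - O ^ 2).PosSemidef)
    (ρ : Matrix (Fin n) (Fin n) ℂ) (hρ : ρ.PosSemidef) (hρtr : ρ.trace = 1) :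
    ((∑ k ∈ Finset.univ.erase g, (q k : ℂ) * (O ^ 2 * (K k * ρ * (K k)ᴴ)).trace)
        + (qA : ℂ) * (O ^ 2 * (KA * ρ * KAᴴ)).trace
        + (qB : ℂ) * (O ^ 2 * (KB * ρ * KBᴴ)).trace)
      ≤ (∑ k, (q k : ℂ) * (O ^ 2 * (K k * ρ * (K k)ᴴ)).trace)
        + ((2 * nO * (2 * qA * qB / (qA + qB)) : ℝ) : ℂ) := by
  have hqApos : 0 < qA := hqA ▸ Finset.sum_pos (fun i _ => hp i) hAne
  have hqBpos : 0 < qB := hqB ▸ Finset.sum_pos (fun i _ => hp i) hBne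
  have hqg : q g = qA + qB := by
    rw [hq g, ← hABunion, Finset.sum_union hABdisj, hqA, hqB]
  have hqgpos : 0 < q g := by rw [hqg]; positivity
  have hqgne : q g ≠ 0 := ne_of_gt hqgpos
  have hqgneC : (q g : ℂ) ≠ 0 := by exact_mod_cast hqgne
  -- (1) qg • Kg = qA • KA + qB • KB
  have e1 : (q g : ℂ) • K g = ∑ i ∈ S g, ((p i : ℝ) : ℂ) • U i := by
    rw [hK g, Finset.smul_sum]
    refine Finset.sum_congr rfl fun i _ => ?_
    rw [smul_smul, ← Complex.ofReal_mul, mul_comm, div_mul_cancel₀ _ hqgne]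
  have e2 : (qA : ℂ) • KA = ∑ i ∈ SA, ((p i : ℝ) : ℂ) • U i := by
    rw [hKA, Finset.smul_sum]
    refine Finset.sum_congr rfl fun i _ => ?_
    rw [smul_smul, ← Complex.ofReal_mul, mul_comm, div_mul_cancel₀ _ (ne_of_gt hqApos)]
  have e3 : (qB : ℂ) • KB = ∑ i ∈ SB, ((p i : ℝ) : ℂ) • U i := by
    rw [hKB, Finset.smul_sum]
    refine Finset.sum_congr rfl fun i _ => ?_
    rw [smul_smul, ← Complex.ofReal_mul, mul_comm, div_mul_cancel₀ _ (ne_of_gt hqBpos)]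
  have hKgs : (q g : ℂ) • K g = (qA : ℂ) • KA + (qB : ℂ) • KB := by
    rw [e1, e2, e3, ← Finset.sum_union hABdisj, hABunion]
  set D : Matrix (Fin n) (Fin n) ℂ := KA - KB with hD
  -- (2) matrix mixing identity
  have hMid : (qA : ℂ) • (KA * ρ * KAᴴ) + (qB : ℂ) • (KB * ρ * KBᴴ)
      = (q g : ℂ) • (K g * ρ * (K g)ᴴ)
        + ((qA * qB / (qA + qB) : ℝ) : ℂ) • (D * ρ * Dᴴ) := by
    apply smul_right_injective (Matrix (Fin n) (Fin n) ℂ) hqgneC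
    show (q g : ℂ) • _ = (q g : ℂ) • _
    have hsc : (q g : ℂ) * ((qA * qB / (qA + qB) : ℝ) : ℂ) = ((qA * qB : ℝ) : ℂ) := by
      rw [hqg]; push_cast
      have : (qA : ℂ) + (qB : ℂ) ≠ 0 := by
        exact_mod_cast (by positivity : (0:ℝ) < qA + qB).ne'
      field_simp
    have hG : (q g : ℂ) • ((q g : ℂ) • (K g * ρ * (K g)ᴴ))
        = ((q g : ℂ) • K g) * ρ * ((q g : ℂ) • K g)ᴴ := by
      rw [conjTranspose_smul, Complex.star_def, Complex.conj_ofReal]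
      simp [smul_mul_assoc, mul_smul_comm, smul_smul]
    have hsc' : (q g : ℂ) • (((qA * qB / (qA + qB) : ℝ) : ℂ) • (D * ρ * Dᴴ))
        = ((qA * qB : ℝ) : ℂ) • (D * ρ * Dᴴ) := by rw [smul_smul, hsc]
    rw [smul_add, smul_add, hG, hsc', hKgs]
    rw [hD, hqg]
    push_cast
    simp only [conjTranspose_add, conjTranspose_sub, conjTranspose_smul,
      Complex.star_def, Complex.conj_ofReal, add_mul, mul_add, sub_mul, mul_sub,
      smul_mul_assoc, mul_smul_comm, smul_smul, smul_sub, smul_add]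
    module
  -- (3) PSD facts
  have hA1 : ((1 : Matrix (Fin n) (Fin n) ℂ) - KAᴴ * KA).PosSemidef := by
    rw [hKA]
    exact aux_contraction SA (fun i => p i / qA)
      (fun i _ => div_nonneg (hp i).le hqApos.le)
      (by rw [← Finset.sum_div, ← hqA, div_self (ne_of_gt hqApos)]) U hU
  have hB1 : ((1 : Matrix (Fin n) (Fin n) ℂ) - KBᴴ * KB).PosSemidef := by
    rw [hKB]
    exact aux_contraction SB (fun i => p i / qB)
      (fun i _ => div_nonneg (hp i).le hqBpos.le)
      (by rw [← Finset.sum_div, ← hqB, div_self (ne_of_gt hqBpos)]) U hU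
  have hD4 : (((4 : ℝ) : ℂ) • (1 : Matrix (Fin n) (Fin n) ℂ) - Dᴴ * D).PosSemidef := by
    have hid : ((4 : ℝ) : ℂ) • (1 : Matrix (Fin n) (Fin n) ℂ) - Dᴴ * D
        = ((2 : ℝ) : ℂ) • ((1 : Matrix (Fin n) (Fin n) ℂ) - KAᴴ * KA)
          + ((2 : ℝ) : ℂ) • ((1 : Matrix (Fin n) (Fin n) ℂ) - KBᴴ * KB)
          + (KA + KB)ᴴ * (KA + KB) := by
      rw [hD]
      simp only [conjTranspose_add, conjTranspose_sub, add_mul, mul_add, sub_mul, mul_sub,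
        smul_sub, smul_add]
      push_cast
      module
    rw [hid]
    exact ((aux_smul_psd 2 (by norm_num) hA1).add (aux_smul_psd 2 (by norm_num) hB1)).add
      (posSemidef_conjTranspose_mul_self _)
  set M : Matrix (Fin n) (Fin n) ℂ := D * ρ * Dᴴ with hM
  have hMpsd : M.PosSemidef := hρ.mul_mul_conjTranspose_same D
  -- (5) trace M ≤ 4
  have htrM : M.trace = (Dᴴ * D * ρ).trace := by
    rw [hM, Matrix.trace_mul_comm, ← Matrix.mul_assoc]
  have htrM4 : M.trace ≤ ((4 : ℝ) : ℂ) := by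
    have h0 := aux_trace_mul_nonneg hD4 hρ
    rw [Matrix.sub_mul, Matrix.smul_mul, Matrix.one_mul, trace_sub, trace_smul,
      smul_eq_mul, hρtr, mul_one, sub_nonneg] at h0
    rw [htrM]; exact h0
  -- (6) 0 ≤ nO
  have hO2 : O ^ 2 = Oᴴ * O := by rw [pow_two, hO.eq]
  have hO2psd : (O ^ 2).PosSemidef := hO2 ▸ posSemidef_conjTranspose_mul_self O
  have hnO0 : (0 : ℂ) ≤ (nO : ℂ) := by
    have h0 := aux_trace_mul_nonneg hnO hρ
    rw [Matrix.sub_mul, Matrix.smul_mul, Matrix.one_mul, trace_sub, trace_smul,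
      smul_eq_mul, hρtr, mul_one, sub_nonneg] at h0
    exact le_trans (aux_trace_mul_nonneg hO2psd hρ) h0
  -- (7) tr(O² M) ≤ nO * tr M ≤ 4 nO
  have hOM : (O ^ 2 * M).trace ≤ (nO : ℂ) * M.trace := by
    have h0 := aux_trace_mul_nonneg hnO hMpsd
    rw [Matrix.sub_mul, Matrix.smul_mul, Matrix.one_mul, trace_sub, trace_smul,
      smul_eq_mul, sub_nonneg] at h0
    exact h0
  have hOM4 : (O ^ 2 * M).trace ≤ ((4 * nO : ℝ) : ℂ) := by
    refine le_trans hOM ?_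
    calc (nO : ℂ) * M.trace ≤ (nO : ℂ) * ((4 : ℝ) : ℂ) :=
          mul_le_mul_of_nonneg_left htrM4 hnO0
      _ = ((4 * nO : ℝ) : ℂ) := by push_cast; ring
  -- (9) scaled bound
  have hfin : ((qA * qB / (qA + qB) : ℝ) : ℂ) * (O ^ 2 * M).trace
      ≤ ((2 * nO * (2 * qA * qB / (qA + qB)) : ℝ) : ℂ) := by
    have hh0 : (0 : ℂ) ≤ ((qA * qB / (qA + qB) : ℝ) : ℂ) := by
      have : (0:ℝ) ≤ qA * qB / (qA + qB) := by positivity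
      exact_mod_cast this
    calc ((qA * qB / (qA + qB) : ℝ) : ℂ) * (O ^ 2 * M).trace
        ≤ ((qA * qB / (qA + qB) : ℝ) : ℂ) * ((4 * nO : ℝ) : ℂ) :=
          mul_le_mul_of_nonneg_left hOM4 hh0
      _ = ((2 * nO * (2 * qA * qB / (qA + qB)) : ℝ) : ℂ) := by push_cast; ring
  -- (10) assemble
  have htr : (qA : ℂ) * (O ^ 2 * (KA * ρ * KAᴴ)).trace
      + (qB : ℂ) * (O ^ 2 * (KB * ρ * KBᴴ)).trace
      = (q g : ℂ) * (O ^ 2 * (K g * ρ * (K g)ᴴ)).trace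
        + ((qA * qB / (qA + qB) : ℝ) : ℂ) * (O ^ 2 * M).trace := by
    have := congrArg (fun X => (O ^ 2 * X).trace) hMid
    simpa only [mul_add, mul_smul_comm, trace_add, trace_smul, smul_eq_mul] using this
  rw [← Finset.sum_erase_add Finset.univ _ (Finset.mem_univ g), add_assoc, add_assoc, htr]
  exact add_le_add_right (add_le_add_right hfin _) _
end

section
/- Generalized monotonicity with observable: if partition {S'_l} refines partition {S_k} of [m], then for any density matrix ρ and Hermitian O, tr[O² K_LCU ρ K_LCU†] ≤ R^O[{S_k}; ρ] ≤ R^O[{S'_l}; ρ] ≤ Σ_{i=1}^m p_i tr[O² U_i ρ U_i†], where R^O[{S_k};ρ] = Σ_k q_k tr[O² K_k ρ K_k†] and K_LCU = Σ_i p_i U_i. -/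
open Matrix
open scoped ComplexOrder

private lemma scalar_jensen {ι : Type*} (s : Finset ι) (w : ι → ℝ) (z : ι → ℂ)
    (hw : ∀ i ∈ s, 0 ≤ w i) (hws : ∑ i ∈ s, w i = 1) :
    Complex.normSq (∑ i ∈ s, (w i : ℂ) * z i) ≤ ∑ i ∈ s, w i * Complex.normSq (z i) := by
  have h1 : ‖∑ i ∈ s, (w i : ℂ) * z i‖ ≤ ∑ i ∈ s, w i * ‖z i‖ := by
    refine (norm_sum_le s _).trans_eq (Finset.sum_congr rfl fun i hi => ?_)
    rw [norm_mul, Complex.norm_real, Real.norm_of_nonneg (hw i hi)]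
  have h2 := Finset.sum_mul_sq_le_sq_mul_sq s (fun i => Real.sqrt (w i))
      (fun i => Real.sqrt (w i) * ‖z i‖)
  have e1 : ∑ i ∈ s, Real.sqrt (w i) * (Real.sqrt (w i) * ‖z i‖)
      = ∑ i ∈ s, w i * ‖z i‖ :=
    Finset.sum_congr rfl fun i hi => by rw [← mul_assoc, Real.mul_self_sqrt (hw i hi)]
  have e2 : ∑ i ∈ s, Real.sqrt (w i) ^ 2 = 1 := by
    rw [← hws]; exact Finset.sum_congr rfl fun i hi => Real.sq_sqrt (hw i hi)
  have e3 : ∑ i ∈ s, (Real.sqrt (w i) * ‖z i‖) ^ 2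
      = ∑ i ∈ s, w i * Complex.normSq (z i) :=
    Finset.sum_congr rfl fun i hi => by
      rw [mul_pow, Real.sq_sqrt (hw i hi), Complex.sq_norm]
  rw [e1, e2, e3, one_mul] at h2
  calc Complex.normSq (∑ i ∈ s, (w i : ℂ) * z i)
      = ‖∑ i ∈ s, (w i : ℂ) * z i‖ ^ 2 := (Complex.sq_norm _).symm
    _ ≤ (∑ i ∈ s, w i * ‖z i‖) ^ 2 :=
        pow_le_pow_left₀ (norm_nonneg _) h1 2
    _ ≤ ∑ i ∈ s, w i * Complex.normSq (z i) := h2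

private lemma mat_jensen {d : ℕ} {ι : Type*} (s : Finset ι) (w : ι → ℝ)
    (hw : ∀ i ∈ s, 0 ≤ w i) (hws : ∑ i ∈ s, w i = 1)
    (A : ι → Matrix (Fin d) (Fin d) ℂ)
    (O : Matrix (Fin d) (Fin d) ℂ) (hO : O.IsHermitian)
    (ρ : Matrix (Fin d) (Fin d) ℂ) (hρ : ρ.PosSemidef) :
    (O ^ 2 * ((∑ i ∈ s, (w i : ℂ) • A i) * ρ * (∑ i ∈ s, (w i : ℂ) • A i)ᴴ)).trace
      ≤ ∑ i ∈ s, (w i : ℂ) * (O ^ 2 * (A i * ρ * (A i)ᴴ)).trace := by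
  open scoped MatrixOrder Matrix.Norms.L2Operator in
  obtain ⟨B, hB⟩ := CStarAlgebra.nonneg_iff_eq_star_mul_self.mp hρ.nonneg
  rw [star_eq_conjTranspose] at hB
  subst hB
  have key : ∀ X : Matrix (Fin d) (Fin d) ℂ,
      (O ^ 2 * (X * (Bᴴ * B) * Xᴴ)).trace
        = ((∑ r, ∑ c, Complex.normSq ((O * X * Bᴴ) r c) : ℝ) : ℂ) := by
    intro X
    have e : (O ^ 2 * (X * (Bᴴ * B) * Xᴴ)).trace
        = ((O * X * Bᴴ) * (O * X * Bᴴ)ᴴ).trace := by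
      rw [pow_two, Matrix.mul_assoc, trace_mul_comm]
      congr 1
      simp [conjTranspose_mul, hO.eq, Matrix.mul_assoc]
    rw [e]
    simp only [Matrix.trace, Matrix.diag, Matrix.mul_apply, conjTranspose_apply,
      Complex.star_def, Complex.mul_conj]
    push_cast
    rfl
  have hlin : O * (∑ i ∈ s, (w i : ℂ) • A i) * Bᴴ = ∑ i ∈ s, (w i : ℂ) • (O * A i * Bᴴ) := by
    rw [Finset.mul_sum, Finset.sum_mul]
    exact Finset.sum_congr rfl fun i _ => by
      rw [Matrix.mul_smul, Matrix.smul_mul]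
  simp only [key, hlin]
  have hR : ∑ i ∈ s, (w i : ℂ) * ((∑ r, ∑ c, Complex.normSq ((O * A i * Bᴴ) r c) : ℝ) : ℂ)
      = ((∑ i ∈ s, w i * ∑ r, ∑ c, Complex.normSq ((O * A i * Bᴴ) r c) : ℝ) : ℂ) := by
    push_cast; rfl
  rw [hR, Complex.real_le_real]
  have swap : ∑ i ∈ s, w i * ∑ r, ∑ c, Complex.normSq ((O * A i * Bᴴ) r c)
      = ∑ r, ∑ c, ∑ i ∈ s, w i * Complex.normSq ((O * A i * Bᴴ) r c) := by
    simp_rw [Finset.mul_sum]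
    rw [Finset.sum_comm]
    refine Finset.sum_congr rfl fun r _ => ?_
    rw [Finset.sum_comm]
  rw [swap]
  refine Finset.sum_le_sum fun r _ => Finset.sum_le_sum fun c _ => ?_
  have he : (∑ i ∈ s, (w i : ℂ) • (O * A i * Bᴴ)) r c
      = ∑ i ∈ s, (w i : ℂ) * (O * A i * Bᴴ) r c := by
    simp only [Matrix.sum_apply, Matrix.smul_apply, smul_eq_mul]
  rw [he]
  exact scalar_jensen s w _ hw hws

private lemma part_sum {m' G'' : ℕ} {M : Type*} [AddCommMonoid M]
    (S : Fin G'' → Finset (Fin m'))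
    (hdisj : ∀ k l, k ≠ l → Disjoint (S k) (S l))
    (hcover : ∀ i, ∃ k, i ∈ S k) (f : Fin m' → M) :
    ∑ k, ∑ i ∈ S k, f i = ∑ i, f i := by
  classical
  choose c hc using hcover
  have hS : ∀ k, S k = Finset.univ.filter (fun i => c i = k) := by
    intro k
    ext i
    simp only [Finset.mem_filter, Finset.mem_univ, true_and]
    constructor
    · intro hik
      by_contra hne
      exact Finset.disjoint_left.mp (hdisj _ _ hne) (hc i) hik
    · rintro rfl; exact hc i
  calc ∑ k, ∑ i ∈ S k, f i
      = ∑ k, ∑ i ∈ Finset.univ.filter (fun i => c i = k), f i := by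
        exact Finset.sum_congr rfl fun k _ => by rw [← hS]
    _ = ∑ i, f i := Finset.sum_fiberwise _ _ _

/-- generalized monotonicity with observable: if `{S'_l}` refines `{S_k}`,
then `tr[O² K_LCU ρ K_LCUᴴ] ≤ R^O[{S_k}; ρ] ≤ R^O[{S'_l}; ρ] ≤ ∑ i, p i tr[O² U i ρ U iᴴ]`. -/
theorem stmt_8 {n m G G' : ℕ}
    (p : Fin m → ℝ) (hp : ∀ i, 0 < p i) (hps : ∑ i, p i = 1)
    (U : Fin m → Matrix (Fin n) (Fin n) ℂ)
    (hU : ∀ i, U i ∈ Matrix.unitaryGroup (Fin n) ℂ)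
    (S : Fin G → Finset (Fin m))
    (hSdisj : ∀ k l, k ≠ l → Disjoint (S k) (S l))
    (hScover : ∀ i, ∃ k, i ∈ S k)
    (hSne : ∀ k, (S k).Nonempty)
    (S' : Fin G' → Finset (Fin m))
    (hS'disj : ∀ k l, k ≠ l → Disjoint (S' k) (S' l))
    (hS'cover : ∀ i, ∃ k, i ∈ S' k)
    (hS'ne : ∀ k, (S' k).Nonempty)
    (hrefine : ∀ l, ∃ k, S' l ⊆ S k)
    (q : Fin G → ℝ) (hq : ∀ k, q k = ∑ i ∈ S k, p i)
    (K : Fin G → Matrix (Fin n) (Fin n) ℂ)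
    (hK : ∀ k, K k = ∑ i ∈ S k, ((p i / q k : ℝ) : ℂ) • U i)
    (q' : Fin G' → ℝ) (hq' : ∀ l, q' l = ∑ i ∈ S' l, p i)
    (K' : Fin G' → Matrix (Fin n) (Fin n) ℂ)
    (hK' : ∀ l, K' l = ∑ i ∈ S' l, ((p i / q' l : ℝ) : ℂ) • U i)
    (O : Matrix (Fin n) (Fin n) ℂ) (hO : O.IsHermitian)
    (ρ : Matrix (Fin n) (Fin n) ℂ) (hρ : ρ.PosSemidef) (hρtr : ρ.trace = 1) :
    (O ^ 2 * ((∑ i, (p i : ℂ) • U i) * ρ * (∑ i, (p i : ℂ) • U i)ᴴ)).trace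
        ≤ ∑ k, (q k : ℂ) * (O ^ 2 * (K k * ρ * (K k)ᴴ)).trace ∧
    (∑ k, (q k : ℂ) * (O ^ 2 * (K k * ρ * (K k)ᴴ)).trace)
        ≤ ∑ l, (q' l : ℂ) * (O ^ 2 * (K' l * ρ * (K' l)ᴴ)).trace ∧
    (∑ l, (q' l : ℂ) * (O ^ 2 * (K' l * ρ * (K' l)ᴴ)).trace)
        ≤ ∑ i, (p i : ℂ) * (O ^ 2 * (U i * ρ * (U i)ᴴ)).trace := by
  classical
  have hq0 : ∀ k, 0 < q k := fun k => by
    rw [hq]; exact Finset.sum_pos (fun i _ => hp i) (hSne k)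
  have hq'0 : ∀ l, 0 < q' l := fun l => by
    rw [hq']; exact Finset.sum_pos (fun i _ => hp i) (hS'ne l)
  choose dmap hd using hrefine
  set T : Fin G → Finset (Fin G') := fun k => Finset.univ.filter (fun l => dmap l = k) with hT
  have hSk_eq : ∀ k, S k = (T k).biUnion S' := by
    intro k; ext i
    simp only [hT, Finset.mem_biUnion, Finset.mem_filter, Finset.mem_univ, true_and]
    constructor
    · intro hik
      obtain ⟨l, hl⟩ := hS'cover i
      refine ⟨l, ?_, hl⟩
      by_contra hne
      exact Finset.disjoint_left.mp (hSdisj _ _ hne) (hd l hl) hik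
    · rintro ⟨l, rfl, hl⟩; exact hd l hl
  have hTdisj : ∀ k, (↑(T k) : Set (Fin G')).PairwiseDisjoint S' :=
    fun k l₁ _ l₂ _ hne => hS'disj _ _ hne
  have hpart : ∀ k, q k = ∑ l ∈ T k, q' l := by
    intro k
    rw [hq, hSk_eq k, Finset.sum_biUnion (hTdisj k)]
    exact Finset.sum_congr rfl fun l _ => (hq' l).symm
  -- the quadratic functional shorthand
  set f : Matrix (Fin n) (Fin n) ℂ → ℂ := fun X => (O ^ 2 * (X * ρ * Xᴴ)).trace with hf
  -- Inequality 3 : refined partition vs individual unitaries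
  have step3 : ∀ l, (q' l : ℂ) * f (K' l) ≤ ∑ i ∈ S' l, (p i : ℂ) * f (U i) := by
    intro l
    have hw : ∀ i ∈ S' l, 0 ≤ p i / q' l := fun i _ => div_nonneg (hp i).le (hq'0 l).le
    have hws : ∑ i ∈ S' l, p i / q' l = 1 := by
      rw [← Finset.sum_div, ← hq' l, div_self (hq'0 l).ne']
    have hj := mat_jensen (S' l) (fun i => p i / q' l) hw hws U O hO ρ hρ
    rw [← hK' l] at hj
    calc (q' l : ℂ) * f (K' l)
        ≤ (q' l : ℂ) * ∑ i ∈ S' l, ((p i / q' l : ℝ) : ℂ) * f (U i) :=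
          mul_le_mul_of_nonneg_left hj (by
            rw [Complex.zero_le_real]; exact (hq'0 l).le)
      _ = ∑ i ∈ S' l, (p i : ℂ) * f (U i) := by
          rw [Finset.mul_sum]
          refine Finset.sum_congr rfl fun i _ => ?_
          rw [← mul_assoc, ← Complex.ofReal_mul, mul_div_cancel₀ _ (hq'0 l).ne']
  have ineq3 : (∑ l, (q' l : ℂ) * f (K' l)) ≤ ∑ i, (p i : ℂ) * f (U i) := by
    calc (∑ l, (q' l : ℂ) * f (K' l)) ≤ ∑ l, ∑ i ∈ S' l, (p i : ℂ) * f (U i) :=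
          Finset.sum_le_sum fun l _ => step3 l
      _ = ∑ i, (p i : ℂ) * f (U i) := part_sum S' hS'disj hS'cover _
  -- Inequality 2 : coarse vs fine partition
  have hKdec : ∀ k, K k = ∑ l ∈ T k, ((q' l / q k : ℝ) : ℂ) • K' l := by
    intro k
    rw [hK, hSk_eq k, Finset.sum_biUnion (hTdisj k)]
    refine Finset.sum_congr rfl fun l hl => ?_
    rw [hK', Finset.smul_sum]
    refine Finset.sum_congr rfl fun i _ => ?_
    rw [smul_smul, ← Complex.ofReal_mul]
    congr 2
    rw [div_mul_div_comm, mul_comm (q' l), mul_div_mul_right _ _ (hq'0 l).ne']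
  have step2 : ∀ k, (q k : ℂ) * f (K k) ≤ ∑ l ∈ T k, (q' l : ℂ) * f (K' l) := by
    intro k
    have hw : ∀ l ∈ T k, 0 ≤ q' l / q k := fun l _ => div_nonneg (hq'0 l).le (hq0 k).le
    have hws : ∑ l ∈ T k, q' l / q k = 1 := by
      rw [← Finset.sum_div, ← hpart k, div_self (hq0 k).ne']
    have hj := mat_jensen (T k) (fun l => q' l / q k) hw hws K' O hO ρ hρ
    rw [← hKdec k] at hj
    calc (q k : ℂ) * f (K k)
        ≤ (q k : ℂ) * ∑ l ∈ T k, ((q' l / q k : ℝ) : ℂ) * f (K' l) :=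
          mul_le_mul_of_nonneg_left hj (by
            rw [Complex.zero_le_real]; exact (hq0 k).le)
      _ = ∑ l ∈ T k, (q' l : ℂ) * f (K' l) := by
          rw [Finset.mul_sum]
          refine Finset.sum_congr rfl fun l _ => ?_
          rw [← mul_assoc, ← Complex.ofReal_mul, mul_div_cancel₀ _ (hq0 k).ne']
  have ineq2 : (∑ k, (q k : ℂ) * f (K k)) ≤ ∑ l, (q' l : ℂ) * f (K' l) := by
    calc (∑ k, (q k : ℂ) * f (K k)) ≤ ∑ k, ∑ l ∈ T k, (q' l : ℂ) * f (K' l) :=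
          Finset.sum_le_sum fun k _ => step2 k
      _ = ∑ l, (q' l : ℂ) * f (K' l) := Finset.sum_fiberwise _ _ _
  -- Inequality 1 : LCU vs coarse partition
  have hqs : ∑ k, q k = 1 := by
    calc ∑ k, q k = ∑ k, ∑ i ∈ S k, p i := Finset.sum_congr rfl fun k _ => hq k
      _ = ∑ i, p i := part_sum S hSdisj hScover _
      _ = 1 := hps
  have hKsum : ∑ k, (q k : ℂ) • K k = ∑ i, (p i : ℂ) • U i := by
    have hk : ∀ k, (q k : ℂ) • K k = ∑ i ∈ S k, (p i : ℂ) • U i := by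
      intro k
      rw [hK, Finset.smul_sum]
      refine Finset.sum_congr rfl fun i _ => ?_
      rw [smul_smul, ← Complex.ofReal_mul, mul_div_cancel₀ _ (hq0 k).ne']
    calc ∑ k, (q k : ℂ) • K k = ∑ k, ∑ i ∈ S k, (p i : ℂ) • U i :=
          Finset.sum_congr rfl fun k _ => hk k
      _ = ∑ i, (p i : ℂ) • U i := part_sum S hSdisj hScover _
  have ineq1 : f (∑ i, (p i : ℂ) • U i) ≤ ∑ k, (q k : ℂ) * f (K k) := by
    have hj := mat_jensen Finset.univ q (fun k _ => (hq0 k).le) hqs K O hO ρ hρ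
    rwa [hKsum] at hj
  exact ⟨ineq1, ineq2, ineq3⟩
end

section
/- Two-group fragmented bound: for a partition {S_A, S_B} of [m], the partition consisting of S_A together with all singletons {i} for i ∈ S_B satisfies R[{S_A} ∪ {{i}: i ∈ S_B}; ρ] ≤ P + q_B + 2H(q_A, q_B), where P = tr[K_LCU† K_LCU ρ], q_A = Σ_{i∈S_A} p_i, q_B = Σ_{i∈S_B} p_i, and H is the harmonic mean. -/
open Matrix
open scoped ComplexOrder


noncomputable def vecOf {n : ℕ} (s M : Matrix (Fin n) (Fin n) ℂ) :
    EuclideanSpace ℂ (Fin n × Fin n) := WithLp.toLp 2 (fun q : Fin n × Fin n => (M * s) q.1 q.2)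

lemma vecOf_add {n : ℕ} (s M N : Matrix (Fin n) (Fin n) ℂ) :
    vecOf s (M + N) = vecOf s M + vecOf s N := by
  ext q; simp [vecOf, add_mul]

lemma vecOf_smul {n : ℕ} (s M : Matrix (Fin n) (Fin n) ℂ) (c : ℂ) :
    vecOf s (c • M) = c • vecOf s M := by
  ext q; simp [vecOf, Matrix.smul_mul]

lemma vecOf_sum {n : ℕ} (s : Matrix (Fin n) (Fin n) ℂ) {ι : Type*} (S : Finset ι)
    (f : ι → Matrix (Fin n) (Fin n) ℂ) :
    vecOf s (∑ i ∈ S, f i) = ∑ i ∈ S, vecOf s (f i) := by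
  classical
  induction S using Finset.induction_on with
  | empty => ext q; simp [vecOf]
  | insert a S h ih =>
    rw [Finset.sum_insert h, Finset.sum_insert h, vecOf_add, ih]

lemma inner_vecOf {n : ℕ} {ρ s : Matrix (Fin n) (Fin n) ℂ} (hs : sᴴ = s)
    (hss : s * s = ρ) (A B : Matrix (Fin n) (Fin n) ℂ) :
    (inner ℂ (vecOf s A) (vecOf s B) : ℂ) = (Aᴴ * B * ρ).trace := by
  have h1 : Aᴴ * B * ρ = Aᴴ * (B * s) * s := by
    rw [← hss]; simp only [Matrix.mul_assoc]
  rw [h1, Matrix.trace_mul_cycle]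
  have h2 : s * Aᴴ * (B * s) = (A * s)ᴴ * (B * s) := by
    rw [Matrix.conjTranspose_mul, hs]
  rw [h2]
  rw [PiLp.inner_apply]
  have h3 : ((A * s)ᴴ * (B * s)).trace
      = ∑ j : Fin n, ∑ i : Fin n, (starRingEnd ℂ) ((A * s) i j) * (B * s) i j := by
    rw [Matrix.trace]
    simp only [Matrix.diag_apply, Matrix.mul_apply, Matrix.conjTranspose_apply]
    rfl
  rw [h3, Finset.sum_comm, Fintype.sum_prod_type]
  simp [vecOf, RCLike.inner_apply, mul_comm]

lemma inner_self_ofReal {ι : Type*} [Fintype ι] (x : EuclideanSpace ℂ ι) :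
    (inner ℂ x x : ℂ) = ((‖x‖ ^ 2 : ℝ) : ℂ) := by
  rw [inner_self_eq_norm_sq_to_K]; norm_cast

set_option maxHeartbeats 1000000 in
/-- two-group fragmented bound: for a partition `{S_A, S_B}` of `[m]`,
`R[{S_A} ∪ {{i} : i ∈ S_B}; ρ] ≤ P + q_B + 2 H(q_A, q_B)` where
`P = tr[K_LCUᴴ K_LCU ρ]` and `H(a,b) = 2ab/(a+b)`. -/
theorem stmt_9 {n m : ℕ}
    (p : Fin m → ℝ) (hp : ∀ i, 0 ≤ p i) (hps : ∑ i, p i = 1)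
    (U : Fin m → Matrix (Fin n) (Fin n) ℂ)
    (hU : ∀ i, U i ∈ Matrix.unitaryGroup (Fin n) ℂ)
    (SA SB : Finset (Fin m)) (hABdisj : Disjoint SA SB)
    (hAne : SA.Nonempty) (hBne : SB.Nonempty)
    (hABunion : SA ∪ SB = Finset.univ) (hBcard : 2 ≤ SB.card)
    (qA qB : ℝ) (hqA : qA = ∑ i ∈ SA, p i) (hqB : qB = ∑ i ∈ SB, p i)
    (hqApos : 0 < qA) (hqBpos : 0 < qB)
    (KA : Matrix (Fin n) (Fin n) ℂ)
    (hKA : KA = ∑ i ∈ SA, ((p i / qA : ℝ) : ℂ) • U i)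
    (ρ : Matrix (Fin n) (Fin n) ℂ) (hρ : ρ.PosSemidef) (hρtr : ρ.trace = 1) :
    ((qA : ℂ) * (KAᴴ * KA * ρ).trace
        + ∑ i ∈ SB, (p i : ℂ) * ((U i)ᴴ * U i * ρ).trace)
      ≤ ((∑ i, (p i : ℂ) • U i)ᴴ * (∑ i, (p i : ℂ) • U i) * ρ).trace
        + ((qB + 2 * (2 * qA * qB / (qA + qB)) : ℝ) : ℂ) := by
  classical
  obtain ⟨s, hs, hss⟩ : ∃ s : Matrix (Fin n) (Fin n) ℂ, sᴴ = s ∧ s * s = ρ :=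
    open scoped MatrixOrder in
    ⟨CFC.sqrt ρ, (CFC.sqrt_nonneg ρ).isSelfAdjoint, CFC.sqrt_mul_sqrt_self ρ hρ.nonneg⟩
  have hinner := inner_vecOf hs hss
  -- basic facts
  have hq1 : qA + qB = 1 := by
    rw [hqA, hqB, ← Finset.sum_union hABdisj, hABunion, hps]
  have hUU : ∀ i, (U i)ᴴ * U i = 1 := by
    intro i
    have := (hU i).1
    rwa [Matrix.star_eq_conjTranspose] at this
  have hUtr : ∀ i, ((U i)ᴴ * (U i) * ρ).trace = 1 := by
    intro i; rw [hUU i, one_mul, hρtr]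
  have hnormU : ∀ i, ‖vecOf s (U i)‖ = 1 := by
    intro i
    have h1 : ((‖vecOf s (U i)‖ ^ 2 : ℝ) : ℂ) = 1 := by
      rw [← inner_self_ofReal, hinner, hUtr]
    have h2 : (‖vecOf s (U i)‖ : ℝ) ^ 2 = 1 := by exact_mod_cast h1
    rw [← Real.sqrt_sq (norm_nonneg _), h2, Real.sqrt_one]
  -- splitting K
  have hsplitM : (∑ i, (p i : ℂ) • U i)
      = (qA : ℂ) • KA + ∑ i ∈ SB, (p i : ℂ) • U i := by
    have h1 : (qA : ℂ) • KA = ∑ i ∈ SA, (p i : ℂ) • U i := by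
      rw [hKA, Finset.smul_sum]
      refine Finset.sum_congr rfl fun i _ => ?_
      rw [smul_smul]
      congr 1
      push_cast
      field_simp
    rw [h1, ← Finset.sum_union hABdisj, hABunion]
  -- vectors
  set xA : EuclideanSpace ℂ (Fin n × Fin n) := vecOf s KA with hxA
  set y : EuclideanSpace ℂ (Fin n × Fin n) := vecOf s (∑ i ∈ SB, (p i : ℂ) • U i) with hy
  have hxA_sum : (qA : ℂ) • xA = ∑ i ∈ SA, (p i : ℂ) • vecOf s (U i) := by
    rw [hxA, ← vecOf_smul]
    have : (qA : ℂ) • KA = ∑ i ∈ SA, (p i : ℂ) • U i := by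
      rw [hsplitM] at *
      rw [hKA, Finset.smul_sum]
      refine Finset.sum_congr rfl fun i _ => ?_
      rw [smul_smul]; congr 1; push_cast; field_simp
    rw [this, vecOf_sum]
    refine Finset.sum_congr rfl fun i _ => ?_
    rw [vecOf_smul]
  have hnorm_smul_sum : ∀ (S : Finset (Fin m)),
      ‖∑ i ∈ S, (p i : ℂ) • vecOf s (U i)‖ ≤ ∑ i ∈ S, p i := by
    intro S
    calc ‖∑ i ∈ S, (p i : ℂ) • vecOf s (U i)‖
        ≤ ∑ i ∈ S, ‖(p i : ℂ) • vecOf s (U i)‖ := norm_sum_le _ _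
      _ = ∑ i ∈ S, p i := by
          refine Finset.sum_congr rfl fun i _ => ?_
          rw [norm_smul, hnormU i, mul_one, Complex.norm_real,
            Real.norm_eq_abs, abs_of_nonneg (hp i)]
  have htA : ‖xA‖ ≤ 1 := by
    have h1 : ‖(qA : ℂ) • xA‖ ≤ qA := by
      rw [hxA_sum]; rw [hqA]; exact hnorm_smul_sum SA
    rw [norm_smul, Complex.norm_real, Real.norm_eq_abs, abs_of_nonneg hqApos.le] at h1
    calc ‖xA‖ = qA * ‖xA‖ / qA := by field_simp
      _ ≤ qA / qA := by gcongr
      _ = 1 := by field_simp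
  have hyB : ‖y‖ ≤ qB := by
    rw [hy, vecOf_sum]
    have h1 : ∀ i ∈ SB, vecOf s ((p i : ℂ) • U i) = (p i : ℂ) • vecOf s (U i) :=
      fun i _ => vecOf_smul _ _ _
    rw [Finset.sum_congr rfl h1, hqB]
    exact hnorm_smul_sum SB
  -- rewrite traces
  have hKAtr : (KAᴴ * KA * ρ).trace = ((‖xA‖ ^ 2 : ℝ) : ℂ) := by
    rw [← hinner, ← hxA, inner_self_ofReal]
  have hKtr : ((∑ i, (p i : ℂ) • U i)ᴴ * (∑ i, (p i : ℂ) • U i) * ρ).trace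
      = ((‖(qA : ℂ) • xA + y‖ ^ 2 : ℝ) : ℂ) := by
    rw [← hinner, hsplitM, vecOf_add, vecOf_smul, ← hxA, ← hy, inner_self_ofReal]
  have hBsum : (∑ i ∈ SB, (p i : ℂ) * ((U i)ᴴ * U i * ρ).trace) = (qB : ℂ) := by
    rw [hqB]
    push_cast
    refine Finset.sum_congr rfl fun i _ => ?_
    rw [hUtr i, mul_one]
  rw [hKAtr, hKtr, hBsum]
  -- reduce to real inequality
  set t := ‖xA‖ with ht
  set b := ‖y‖ with hb
  set w := ‖(qA : ℂ) • xA + y‖ with hw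
  have hgoal : ((qA * t ^ 2 + qB : ℝ) : ℂ)
      ≤ ((w ^ 2 + (qB + 2 * (2 * qA * qB / (qA + qB))) : ℝ) : ℂ) := by
    rw [Complex.real_le_real]
    have hsum1 : qA + qB = 1 := hq1
    have hxnorm : ‖(qA : ℂ) • xA‖ = qA * t := by
      rw [norm_smul, Complex.norm_real, Real.norm_eq_abs, abs_of_nonneg hqApos.le]
    have habs : |qA * t - b| ≤ w := by
      have := abs_norm_sub_norm_le ((qA : ℂ) • xA) (-y)
      rwa [norm_neg, sub_neg_eq_add, hxnorm] at this
    have hsq : (qA * t - b) ^ 2 ≤ w ^ 2 := by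
      rw [← sq_abs (qA * t - b)]
      exact pow_le_pow_left₀ (abs_nonneg _) habs 2
    have ht0 : 0 ≤ t := norm_nonneg _
    have hb0 : 0 ≤ b := norm_nonneg _
    rw [hsum1, div_one]
    have ht2 : t ^ 2 ≤ 1 := by
      calc t ^ 2 = t * t := sq t
        _ ≤ 1 * 1 := mul_le_mul htA htA ht0 one_pos.le
        _ = 1 := one_mul 1
    have h1 : qA * qB * t ^ 2 ≤ qA * qB := by
      have := mul_nonneg (mul_nonneg hqApos.le hqBpos.le) (sub_nonneg.mpr ht2)
      linarith [this, mul_sub (qA * qB) (1 : ℝ) (t ^ 2)]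
    have h2 : t * b ≤ qB := by
      calc t * b ≤ 1 * b := mul_le_mul_of_nonneg_right htA hb0
        _ = b := one_mul b
        _ ≤ qB := hyB
    have h3 : qA * (t * b) ≤ qA * qB := mul_le_mul_of_nonneg_left h2 hqApos.le
    have h4 : qA * t ^ 2 * (qA + qB) = qA * t ^ 2 := by rw [hsum1]; ring
    have h5 : (qA * t - b) ^ 2 = qA * qA * t ^ 2 - 2 * (qA * (t * b)) + b ^ 2 := by
      ring
    linarith [hsq, h1, h3, h4, h5, sq_nonneg b, (mul_pos hqApos hqBpos).le]
  calc (qA : ℂ) * ((t ^ 2 : ℝ) : ℂ) + (qB : ℂ) = ((qA * t ^ 2 + qB : ℝ) : ℂ) := by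
        push_cast; ring
    _ ≤ ((w ^ 2 + (qB + 2 * (2 * qA * qB / (qA + qB))) : ℝ) : ℂ) := hgoal
    _ = ((w ^ 2 : ℝ) : ℂ) + ((qB + 2 * (2 * qA * qB / (qA + qB)) : ℝ) : ℂ) := by
        push_cast; ring
end

section
/- Sample complexity of ratio estimation (Bernstein): let (X_i, Y_i), i = 1,…,N be i.i.d. copies of bounded random variables (X,Y) with |X|, |Y| ≤ c, means μ_X, μ_Y (μ_Y ≠ 0), variance bounds Var[X] ≤ σ̃_X², Var[Y] ≤ σ̃_Y², and |μ_X/μ_Y| ≤ c'. For ε ∈ (0, 2c'] and δ > 0, if N ≥ 32 ln(4/δ) · max{σ̃_X²/(|μ_Y|²ε²) + c/(6|μ_Y|ε), (c')²σ̃_Y²/(|μ_Y|²ε²) + c'c/(6|μ_Y|ε)}, then Pr(|X̄_N/Ȳ_N − μ_X/μ_Y| ≤ ε) ≥ 1 − δ, where X̄_N, Ȳ_N are the sample means. -/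
open MeasureTheory ProbabilityTheory

lemma aux_one_sub_mul_exp_le (x : ℝ) : (1 - x) * Real.exp x ≤ 1 := by
  have h := Real.add_one_le_exp (-x)
  have h2 : Real.exp (-x) * Real.exp x = 1 := by rw [← Real.exp_add]; simp
  nlinarith [Real.exp_pos x]

lemma aux_exp_le_neg (x : ℝ) (hx : x ≤ 0) : Real.exp x ≤ 1 + x + x ^ 2 / 2 := by
  have hd : ∀ y : ℝ, HasDerivAt (fun y : ℝ => 1 + y + y ^ 2 / 2 - Real.exp y)
      (1 + y - Real.exp y) y := by
    intro y
    have h1 : HasDerivAt (fun y : ℝ => 1 + y + y ^ 2 / 2) (1 + y) y := by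
      have := ((hasDerivAt_id y).const_add (1:ℝ)).add ((hasDerivAt_pow 2 y).div_const 2)
      exact this.congr_deriv (by push_cast; ring)
    exact h1.sub (Real.hasDerivAt_exp y)
  have hanti : Antitone (fun y : ℝ => 1 + y + y ^ 2 / 2 - Real.exp y) := by
    apply antitone_of_deriv_nonpos
    · exact fun y => (hd y).differentiableAt
    · intro y
      rw [(hd y).deriv]
      have := Real.add_one_le_exp y
      linarith
  have := hanti hx
  simp only at this
  simp at this
  linarith

lemma aux_exp_le_pos (x : ℝ) (hx : 0 ≤ x) (hx3 : x < 3) :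
    (3 - x) * Real.exp x ≤ (3 - x) * (1 + x) + 3 * x ^ 2 / 2 := by
  have hdh : ∀ y : ℝ, HasDerivAt (fun y : ℝ => 2 + y - (2 - y) * Real.exp y)
      (1 - (1 - y) * Real.exp y) y := by
    intro y
    have h1 : HasDerivAt (fun y : ℝ => 2 + y) (1 : ℝ) y := by
      simpa using (hasDerivAt_id y).const_add (2:ℝ)
    have h2 : HasDerivAt (fun y : ℝ => (2 - y) * Real.exp y)
        ((-1) * Real.exp y + (2 - y) * Real.exp y) y := by
      exact (((hasDerivAt_id y).const_sub (2:ℝ)).congr_deriv (by norm_num)).mul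
        (Real.hasDerivAt_exp y)
    exact (h1.sub h2).congr_deriv (by ring)
  have hmonoh : Monotone (fun y : ℝ => 2 + y - (2 - y) * Real.exp y) := by
    apply monotone_of_deriv_nonneg (fun y => (hdh y).differentiableAt)
    intro y
    rw [(hdh y).deriv]
    have := aux_one_sub_mul_exp_le y
    linarith
  have hhnonneg : ∀ y : ℝ, 0 ≤ y → 0 ≤ 2 + y - (2 - y) * Real.exp y := by
    intro y hy
    have := hmonoh hy
    simpa using this
  have hdg : ∀ y : ℝ, HasDerivAt
      (fun y : ℝ => (3 - y) * (1 + y) + 3 * y ^ 2 / 2 - (3 - y) * Real.exp y)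
      (2 + y - (2 - y) * Real.exp y) y := by
    intro y
    have h1 : HasDerivAt (fun y : ℝ => (3 - y) * (1 + y))
        ((-1) * (1 + y) + (3 - y) * 1) y :=
      (((hasDerivAt_id y).const_sub (3:ℝ)).congr_deriv (by norm_num)).mul
        (((hasDerivAt_id y).const_add (1:ℝ)))
    have h2 : HasDerivAt (fun y : ℝ => 3 * y ^ 2 / 2) (3 * y) y := by
      have := ((hasDerivAt_pow 2 y).const_mul (3:ℝ)).div_const 2
      exact this.congr_deriv (by push_cast; ring)
    have h3 : HasDerivAt (fun y : ℝ => (3 - y) * Real.exp y)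
        ((-1) * Real.exp y + (3 - y) * Real.exp y) y :=
      (((hasDerivAt_id y).const_sub (3:ℝ)).congr_deriv (by norm_num)).mul
        (Real.hasDerivAt_exp y)
    exact ((h1.add h2).sub h3).congr_deriv (by ring)
  have hmonog : MonotoneOn
      (fun y : ℝ => (3 - y) * (1 + y) + 3 * y ^ 2 / 2 - (3 - y) * Real.exp y)
      (Set.Ici 0) := by
    apply monotoneOn_of_deriv_nonneg (convex_Ici 0)
    · exact (Continuous.continuousOn (by continuity))
    · exact fun y _ => (hdg y).differentiableAt.differentiableWithinAt
    · intro y hy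
      rw [(hdg y).deriv]
      exact hhnonneg y (le_of_lt (by simpa using hy))
  have := hmonog (Set.mem_Ici.2 le_rfl) (Set.mem_Ici.2 hx) hx
  simp only [Real.exp_zero] at this
  norm_num at this
  linarith

/-- key pointwise bound: for `|x| ≤ u < 3`, `exp x ≤ 1 + x + x²/(2(1 - u/3))`. -/
lemma aux_exp_quad_bound (x u : ℝ) (hxu : |x| ≤ u) (hu3 : u < 3) :
    Real.exp x ≤ 1 + x + x ^ 2 / (2 * (1 - u / 3)) := by
  have hu0 : 0 ≤ u := le_trans (abs_nonneg x) hxu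
  have hden : 0 < 1 - u / 3 := by linarith
  rcases le_or_gt x 0 with hx | hx
  · have h1 := aux_exp_le_neg x hx
    have h2 : x ^ 2 / 2 ≤ x ^ 2 / (2 * (1 - u / 3)) := by
      apply div_le_div_of_nonneg_left (sq_nonneg x) (by linarith)
      nlinarith
    linarith
  · have hx3 : x < 3 := lt_of_le_of_lt (le_trans (le_abs_self x) hxu) hu3
    have h1 := aux_exp_le_pos x hx.le hx3
    -- from h1 : exp x ≤ 1 + x + x²/(2(1-x/3)) ≤ 1 + x + x²/(2(1-u/3))
    have hdx : 0 < 3 - x := by linarith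
    have h2 : Real.exp x ≤ 1 + x + x ^ 2 / (2 * (1 - x / 3)) := by
      set q := x ^ 2 / (2 * (1 - x / 3)) with hqdef
      have hq : q * (2 * (3 - x)) = 3 * x ^ 2 := by
        rw [hqdef]; field_simp
      nlinarith [h1, hq, hdx]
    have h3 : x ^ 2 / (2 * (1 - x / 3)) ≤ x ^ 2 / (2 * (1 - u / 3)) := by
      apply div_le_div_of_nonneg_left (sq_nonneg x) (by linarith)
      have : x ≤ u := le_trans (le_abs_self x) hxu
      nlinarith
    linarith

open MeasureTheory ProbabilityTheory in
lemma aux_mgf_le {Ω : Type*} [MeasurableSpace Ω] (μ : Measure Ω) [IsProbabilityMeasure μ]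
    (W : Ω → ℝ) (hW : Measurable W) (b : ℝ) (hb : 0 < b)
    (hbd : ∀ᵐ ω ∂μ, |W ω| ≤ b) (hmean : ∫ ω, W ω ∂μ = 0)
    (l : ℝ) (hl : 0 ≤ l) (hlb : l * b < 3) :
    mgf W μ l ≤ Real.exp (l ^ 2 * (∫ ω, (W ω) ^ 2 ∂μ) / (2 * (1 - l * b / 3))) := by
  have hden : 0 < 1 - l * b / 3 := by
    have : 0 ≤ l * b := mul_nonneg hl hb.le
    linarith
  set K : ℝ := (2 * (1 - l * b / 3))⁻¹ with hK
  have hK0 : 0 ≤ K := inv_nonneg.2 (by linarith)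
  have hint1 : Integrable W μ := by
    refine Integrable.mono' (integrable_const b) hW.aestronglyMeasurable ?_
    filter_upwards [hbd] with ω h using by simpa using h
  have hint2 : Integrable (fun ω => (W ω) ^ 2) μ := by
    refine Integrable.mono' (integrable_const (b ^ 2)) (hW.pow_const 2).aestronglyMeasurable ?_
    filter_upwards [hbd] with ω h
    rw [Real.norm_eq_abs, abs_pow]
    exact pow_le_pow_left₀ (abs_nonneg _) h 2
  have hintexp : Integrable (fun ω => Real.exp (l * W ω)) μ := by
    refine Integrable.mono' (integrable_const (Real.exp (l * b)))
      ((hW.const_mul l).exp).aestronglyMeasurable ?_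
    filter_upwards [hbd] with ω h
    rw [Real.norm_eq_abs, abs_of_pos (Real.exp_pos _), Real.exp_le_exp]
    calc l * W ω ≤ l * |W ω| := by
          exact mul_le_mul_of_nonneg_left (le_abs_self _) hl
      _ ≤ l * b := mul_le_mul_of_nonneg_left h hl
  have hptwise : ∀ᵐ ω ∂μ, Real.exp (l * W ω) ≤
      1 + (l * W ω + (W ω) ^ 2 * (l ^ 2 * K)) := by
    filter_upwards [hbd] with ω h
    have := aux_exp_quad_bound (l * W ω) (l * b)
      (by rw [abs_mul, abs_of_nonneg hl]; exact mul_le_mul_of_nonneg_left h hl) hlb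
    calc Real.exp (l * W ω) ≤ 1 + l * W ω + (l * W ω) ^ 2 / (2 * (1 - l * b / 3)) := this
      _ = 1 + (l * W ω + (W ω) ^ 2 * (l ^ 2 * K)) := by
          rw [hK, div_eq_mul_inv]; ring
  have hintRHS : Integrable (fun ω => 1 + (l * W ω + (W ω) ^ 2 * (l ^ 2 * K))) μ :=
    (integrable_const 1).add ((hint1.const_mul l).add (hint2.mul_const _))
  have h1 : mgf W μ l ≤ ∫ ω, (1 + (l * W ω + (W ω) ^ 2 * (l ^ 2 * K))) ∂μ :=
    integral_mono_ae hintexp hintRHS hptwise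
  have h2 : ∫ ω, (1 + (l * W ω + (W ω) ^ 2 * (l ^ 2 * K))) ∂μ
      = 1 + (∫ ω, (W ω) ^ 2 ∂μ) * (l ^ 2 * K) := by
    have hg1 : Integrable (fun ω => l * W ω) μ := hint1.const_mul l
    have hg2 : Integrable (fun ω => W ω ^ 2 * (l ^ 2 * K)) μ := hint2.mul_const _
    have hg : Integrable (fun ω => l * W ω + W ω ^ 2 * (l ^ 2 * K)) μ := hg1.add hg2
    rw [integral_add (integrable_const 1) hg, integral_add hg1 hg2,
      integral_const_mul, integral_mul_const, hmean]
    simp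
  have h3 : (∫ ω, (W ω) ^ 2 ∂μ) * (l ^ 2 * K)
      = l ^ 2 * (∫ ω, (W ω) ^ 2 ∂μ) / (2 * (1 - l * b / 3)) := by
    rw [hK, div_eq_mul_inv]; ring
  calc mgf W μ l ≤ 1 + (∫ ω, (W ω) ^ 2 ∂μ) * (l ^ 2 * K) := h2 ▸ h1
    _ ≤ Real.exp ((∫ ω, (W ω) ^ 2 ∂μ) * (l ^ 2 * K)) := by
        have := Real.add_one_le_exp ((∫ ω, (W ω) ^ 2 ∂μ) * (l ^ 2 * K))
        linarith
    _ = _ := by rw [h3]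

open MeasureTheory ProbabilityTheory in
lemma aux_bernstein {Ω : Type*} [MeasurableSpace Ω] (μ : Measure Ω) [IsProbabilityMeasure μ]
    (W : ℕ → Ω → ℝ) (hWmeas : ∀ i, Measurable (W i))
    (hWindep : iIndepFun W μ)
    (hWident : ∀ i, IdentDistrib (W i) (W 0) μ μ)
    (b v t : ℝ) (hb : 0 < b) (ht : 0 < t)
    (hWbd : ∀ᵐ ω ∂μ, |W 0 ω| ≤ b)
    (hmean : ∫ ω, W 0 ω ∂μ = 0) (hv : ∫ ω, (W 0 ω) ^ 2 ∂μ ≤ v) (N : ℕ) :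
    (μ {ω | (N : ℝ) * t ≤ ∑ i ∈ Finset.range N, W i ω}).toReal ≤
      Real.exp (-(N : ℝ) * t ^ 2 / (2 * v + 2 * b * t / 3)) := by
  have hI0 : 0 ≤ ∫ ω, (W 0 ω) ^ 2 ∂μ := integral_nonneg fun ω => sq_nonneg _
  have hv0 : 0 ≤ v := le_trans hI0 hv
  rcases hv0.eq_or_lt with hveq | hvpos
  · -- degenerate case v = 0 : W i = 0 a.e.
    have hIeq : ∫ ω, (W 0 ω) ^ 2 ∂μ = 0 := le_antisymm (hveq ▸ hv) hI0
    have hint2 : Integrable (fun ω => (W 0 ω) ^ 2) μ := by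
      refine Integrable.mono' (integrable_const (b ^ 2))
        ((hWmeas 0).pow_const 2).aestronglyMeasurable ?_
      filter_upwards [hWbd] with ω h
      rw [Real.norm_eq_abs, abs_pow]
      exact pow_le_pow_left₀ (abs_nonneg _) h 2
    have hW0 : ∀ᵐ ω ∂μ, W 0 ω = 0 := by
      have := (integral_eq_zero_iff_of_nonneg (fun ω => sq_nonneg (W 0 ω)) hint2).1 hIeq
      filter_upwards [this] with ω h
      exact pow_eq_zero_iff (n := 2) (by norm_num) |>.1 h
    have hWi : ∀ i, ∀ᵐ ω ∂μ, W i ω = 0 := fun i =>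
      (hWident i).symm.ae_snd (p := fun x => x = 0) (measurableSet_eq) hW0
    rcases Nat.eq_zero_or_pos N with hNz | hNpos
    · subst hNz
      simp only [Nat.cast_zero, zero_mul, Finset.range_zero, Finset.sum_empty]
      have : {ω : Ω | (0:ℝ) ≤ 0} = Set.univ := by ext ω; simp
      rw [this]
      simp [Real.exp_nonneg]
    · have hsum : ∀ᵐ ω ∂μ, ∑ i ∈ Finset.range N, W i ω = 0 := by
        have : ∀ᵐ ω ∂μ, ∀ i ∈ Finset.range N, W i ω = 0 :=
          (MeasureTheory.ae_ball_iff (Finset.countable_toSet _)).2 fun i _ => hWi i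
        filter_upwards [this] with ω h
        exact Finset.sum_eq_zero h
      have hNt : 0 < (N : ℝ) * t := mul_pos (by exact_mod_cast hNpos) ht
      have hμ0 : μ {ω | (N : ℝ) * t ≤ ∑ i ∈ Finset.range N, W i ω} = 0 := by
        refine measure_mono_null ?_ (ae_iff.mp hsum)
        intro ω hω
        simp only [Set.mem_setOf_eq] at *
        intro heq
        rw [heq] at hω
        linarith
      rw [hμ0]
      simp [Real.exp_nonneg]
  · -- main case v > 0
    set D : ℝ := v + b * t / 3 with hD
    have hDpos : 0 < D := by positivity
    set l : ℝ := t / D with hl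
    have hlpos : 0 < l := div_pos ht hDpos
    have hlb : l * b < 3 := by
      rw [hl, div_mul_eq_mul_div, div_lt_iff₀ hDpos]
      have h3D : 3 * D = 3 * v + b * t := by rw [hD]; ring
      linarith
    have hbd_i : ∀ i, ∀ᵐ ω ∂μ, |W i ω| ≤ b := fun i =>
      (hWident i).symm.ae_snd (p := fun x => |x| ≤ b)
        (measurableSet_le measurable_abs measurable_const) hWbd
    have hint_i : ∀ i, Integrable (fun ω => Real.exp (l * W i ω)) μ := by
      intro i
      refine Integrable.mono' (integrable_const (Real.exp (l * b)))
        (((hWmeas i).const_mul l).exp).aestronglyMeasurable ?_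
      filter_upwards [hbd_i i] with ω h
      rw [Real.norm_eq_abs, abs_of_pos (Real.exp_pos _), Real.exp_le_exp]
      calc l * W i ω ≤ l * |W i ω| := mul_le_mul_of_nonneg_left (le_abs_self _) hlpos.le
        _ ≤ l * b := mul_le_mul_of_nonneg_left h hlpos.le
    have hintS : Integrable (fun ω => Real.exp (l * (∑ i ∈ Finset.range N, W i) ω)) μ :=
      hWindep.integrable_exp_mul_sum hWmeas fun i _ => hint_i i
    have hchern := measure_ge_le_exp_mul_mgf (μ := μ) (X := ∑ i ∈ Finset.range N, W i)
      ((N : ℝ) * t) hlpos.le hintS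
    have hseteq : {ω | (N : ℝ) * t ≤ ∑ i ∈ Finset.range N, W i ω} =
        {ω | (N : ℝ) * t ≤ (∑ i ∈ Finset.range N, W i) ω} := by
      ext ω; simp [Finset.sum_apply]
    have hmgf_eq : ∀ i, mgf (W i) μ l = mgf (W 0) μ l := by
      intro i
      simp only [mgf]
      exact ((hWident i).comp (u := fun x => Real.exp (l * x))
        (Real.measurable_exp.comp (measurable_id.const_mul l))).integral_eq
    have hmgf_sum : mgf (∑ i ∈ Finset.range N, W i) μ l = (mgf (W 0) μ l) ^ N := by
      rw [hWindep.mgf_sum hWmeas (Finset.range N),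
        Finset.prod_congr rfl fun i _ => hmgf_eq i, Finset.prod_const, Finset.card_range]
    have hmgf0 : mgf (W 0) μ l ≤
        Real.exp (l ^ 2 * v / (2 * (1 - l * b / 3))) := by
      refine le_trans (aux_mgf_le μ (W 0) (hWmeas 0) b hb hWbd hmean l hlpos.le hlb) ?_
      rw [Real.exp_le_exp]
      have hd : 0 < 1 - l * b / 3 := by linarith
      apply div_le_div_of_nonneg_right ?_ (by linarith)
      exact mul_le_mul_of_nonneg_left hv (sq_nonneg l)
    have hexp_alg : l ^ 2 * v / (2 * (1 - l * b / 3)) - l * t =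
        -t ^ 2 / (2 * v + 2 * b * t / 3) := by
      have h1 : D ≠ 0 := hDpos.ne'
      have h2 : (1 - l * b / 3) ≠ 0 := by
        have : 0 < 1 - l * b / 3 := by linarith
        exact this.ne'
      have h3 : 2 * v + 2 * b * t / 3 ≠ 0 := by positivity
      have h2D : 2 * v + 2 * b * t / 3 = 2 * D := by rw [hD]; ring
      have hone : 1 - l * b / 3 = v / D := by
        rw [hl, hD]; field_simp; ring
      rw [h2D, hone, hl]
      field_simp
      ring
    calc (μ {ω | (N : ℝ) * t ≤ ∑ i ∈ Finset.range N, W i ω}).toReal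
        ≤ Real.exp (-l * ((N : ℝ) * t)) * mgf (∑ i ∈ Finset.range N, W i) μ l := by
          rw [hseteq]; exact hchern
      _ ≤ Real.exp (-l * ((N : ℝ) * t)) * (Real.exp (l ^ 2 * v / (2 * (1 - l * b / 3)))) ^ N := by
          rw [hmgf_sum]
          exact mul_le_mul_of_nonneg_left (pow_le_pow_left₀ mgf_nonneg hmgf0 N)
            (Real.exp_pos _).le
      _ = Real.exp ((N : ℝ) * (l ^ 2 * v / (2 * (1 - l * b / 3)) - l * t)) := by
          rw [← Real.exp_nat_mul, ← Real.exp_add]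
          congr 1
          ring
      _ = Real.exp (-(N : ℝ) * t ^ 2 / (2 * v + 2 * b * t / 3)) := by
          rw [hexp_alg]
          congr 1
          ring

lemma aux_ratio (x y a b ε c' : ℝ) (hb : b ≠ 0) (hc' : |a / b| ≤ c')
    (hε : 0 < ε) (hε2 : ε ≤ 2 * c')
    (hx : |x - a| ≤ |b| * ε / 4) (hy : |y - b| ≤ |b| * ε / (4 * c')) :
    |x / y - a / b| ≤ ε := by
  have hc'pos : 0 < c' := by linarith
  have hbpos : 0 < |b| := abs_pos.2 hb
  have habsa : |a| ≤ c' * |b| := by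
    rw [abs_div] at hc'
    calc |a| = |a| / |b| * |b| := by field_simp
      _ ≤ c' * |b| := by
          exact mul_le_mul_of_nonneg_right hc' hbpos.le
  have hy' : |y - b| * (4 * c') ≤ |b| * ε := by
    rw [le_div_iff₀ (by positivity)] at hy
    exact hy
  have hyhalf : |b| / 2 ≤ |y| := by
    have h1 : |y - b| ≤ |b| / 2 := by nlinarith
    have h2 : |b| - |y| ≤ |y - b| := by
      have := abs_sub_abs_le_abs_sub b y
      rwa [abs_sub_comm] at this
    linarith
  have hypos : 0 < |y| := by linarith
  have hy0 : y ≠ 0 := abs_pos.1 hypos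
  have hkey : x / y - a / b = ((x - a) * b - a * (y - b)) / (y * b) := by
    field_simp
    ring
  rw [hkey, abs_div, abs_mul, div_le_iff₀ (by positivity)]
  have hnum : |(x - a) * b - a * (y - b)| ≤ |x - a| * |b| + |a| * |y - b| := by
    calc |(x - a) * b - a * (y - b)| ≤ |(x - a) * b| + |a * (y - b)| := abs_sub _ _
      _ = |x - a| * |b| + |a| * |y - b| := by rw [abs_mul, abs_mul]
  have h1 : |x - a| * |b| ≤ |b| * ε / 4 * |b| :=
    mul_le_mul_of_nonneg_right hx hbpos.le
  have h2 : |a| * |y - b| ≤ |b| * |b| * ε / 4 := by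
    have := mul_le_mul habsa (le_refl (|y - b|)) (abs_nonneg _) (by positivity)
    have h3 : c' * |b| * |y - b| * 4 ≤ |b| * (|b| * ε) := by nlinarith
    nlinarith
  nlinarith [mul_le_mul_of_nonneg_left hyhalf (mul_pos hε hbpos).le]

open MeasureTheory ProbabilityTheory in
lemma aux_two_sided {Ω : Type*} [MeasurableSpace Ω] (μ : Measure Ω) [IsProbabilityMeasure μ]
    (V : ℕ → Ω → ℝ) (hVmeas : ∀ i, Measurable (V i))
    (hVindep : iIndepFun V μ)
    (hVident : ∀ i, IdentDistrib (V i) (V 0) μ μ)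
    (c m v t : ℝ) (hc : 0 < c) (ht : 0 < t)
    (hbd : ∀ ω, |V 0 ω| ≤ c) (hm : ∫ ω, V 0 ω ∂μ = m)
    (hvar : variance (V 0) μ ≤ v) (N : ℕ) :
    μ {ω | ¬ |(∑ i ∈ Finset.range N, V i ω) / N - m| ≤ t} ≤
      ENNReal.ofReal (2 * Real.exp (-(N : ℝ) * t ^ 2 / (2 * v + 2 * (2 * c) * t / 3))) := by
  have hint0 : Integrable (V 0) μ := by
    refine Integrable.mono' (integrable_const c) (hVmeas 0).aestronglyMeasurable ?_
    exact ae_of_all _ fun ω => by simpa using hbd ω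
  have hmabs : |m| ≤ c := by
    rw [← hm]
    calc |∫ ω, V 0 ω ∂μ| ≤ ∫ ω, |V 0 ω| ∂μ := by
          simpa [Real.norm_eq_abs] using
            MeasureTheory.norm_integral_le_integral_norm (μ := μ) fun ω => V 0 ω
      _ ≤ ∫ _ω, c ∂μ := integral_mono hint0.abs (integrable_const c) fun ω => hbd ω
      _ = c := by simp
  -- the two centered families
  set W : ℕ → Ω → ℝ := fun i ω => V i ω - m with hW
  set W' : ℕ → Ω → ℝ := fun i ω => m - V i ω with hW'
  have hWmeas : ∀ i, Measurable (W i) := fun i => (hVmeas i).sub measurable_const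
  have hW'meas : ∀ i, Measurable (W' i) := fun i => measurable_const.sub (hVmeas i)
  have hWindep : iIndepFun W μ :=
    hVindep.comp (fun _ x => x - m) fun _ => measurable_id.sub measurable_const
  have hW'indep : iIndepFun W' μ :=
    hVindep.comp (fun _ x => m - x) fun _ => measurable_const.sub measurable_id
  have hWident : ∀ i, IdentDistrib (W i) (W 0) μ μ := fun i =>
    (hVident i).comp (u := fun x => x - m) (measurable_id.sub measurable_const)
  have hW'ident : ∀ i, IdentDistrib (W' i) (W' 0) μ μ := fun i =>
    (hVident i).comp (u := fun x => m - x) (measurable_const.sub measurable_id)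
  have hWbd : ∀ᵐ ω ∂μ, |W 0 ω| ≤ 2 * c := ae_of_all _ fun ω => by
    have h1 := abs_le.1 (hbd ω)
    have h2 := abs_le.1 hmabs
    simp only [hW]
    rw [abs_le]
    constructor <;> [linarith [h1.1, h2.2]; linarith [h1.2, h2.1]]
  have hW'bd : ∀ᵐ ω ∂μ, |W' 0 ω| ≤ 2 * c := by
    filter_upwards [hWbd] with ω h
    rwa [hW', ← abs_neg, neg_sub]
  have hWmean : ∫ ω, W 0 ω ∂μ = 0 := by
    simp only [hW]
    rw [integral_sub hint0 (integrable_const m), hm]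
    simp
  have hW'mean : ∫ ω, W' 0 ω ∂μ = 0 := by
    simp only [hW']
    rw [integral_sub (integrable_const m) hint0, hm]
    simp
  have hmemℒp : MemLp (V 0) 2 μ := by
    refine memLp_of_bounded (a := -c) (b := c) (ae_of_all _ fun ω => ?_)
      (hVmeas 0).aestronglyMeasurable 2
    exact abs_le.1 (hbd ω)
  have hWsq : ∫ ω, (W 0 ω) ^ 2 ∂μ ≤ v := by
    have hveq := variance_eq_integral hmemℒp.aemeasurable
    have : ∫ ω, (W 0 ω) ^ 2 ∂μ = variance (V 0) μ := by
      rw [hveq]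
      simp only [hW, Pi.pow_apply, Pi.sub_apply, hm]
    rw [this]; exact hvar
  have hW'sq : ∫ ω, (W' 0 ω) ^ 2 ∂μ ≤ v := by
    have : ∫ ω, (W' 0 ω) ^ 2 ∂μ = ∫ ω, (W 0 ω) ^ 2 ∂μ := by
      congr 1 with ω
      simp only [hW, hW']
      ring
    rw [this]; exact hWsq
  have hB := aux_bernstein μ W hWmeas hWindep hWident (2 * c) v t (by linarith) ht
    hWbd hWmean hWsq N
  have hB' := aux_bernstein μ W' hW'meas hW'indep hW'ident (2 * c) v t (by linarith) ht
    hW'bd hW'mean hW'sq N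
  set E : ℝ := Real.exp (-(N : ℝ) * t ^ 2 / (2 * v + 2 * (2 * c) * t / 3)) with hE
  have hBj : μ {ω | (N : ℝ) * t ≤ ∑ i ∈ Finset.range N, W i ω} ≤ ENNReal.ofReal E :=
    (ENNReal.le_ofReal_iff_toReal_le (measure_ne_top μ _) (Real.exp_nonneg _)).2 hB
  have hB'j : μ {ω | (N : ℝ) * t ≤ ∑ i ∈ Finset.range N, W' i ω} ≤ ENNReal.ofReal E :=
    (ENNReal.le_ofReal_iff_toReal_le (measure_ne_top μ _) (Real.exp_nonneg _)).2 hB'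
  have hsubset : {ω | ¬ |(∑ i ∈ Finset.range N, V i ω) / N - m| ≤ t} ⊆
      {ω | (N : ℝ) * t ≤ ∑ i ∈ Finset.range N, W i ω} ∪
      {ω | (N : ℝ) * t ≤ ∑ i ∈ Finset.range N, W' i ω} := by
    intro ω hω
    simp only [Set.mem_setOf_eq, not_le] at hω
    rcases Nat.eq_zero_or_pos N with hNz | hNpos
    · subst hNz
      simp only [Nat.cast_zero, zero_mul, Finset.range_zero, Finset.sum_empty]
      left
      exact Set.mem_setOf_eq ▸ le_rfl
    · have hNR : (0 : ℝ) < N := by exact_mod_cast hNpos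
      have hsum : ∑ i ∈ Finset.range N, W i ω =
          (∑ i ∈ Finset.range N, V i ω) - N * m := by
        simp only [hW, Finset.sum_sub_distrib, Finset.sum_const, Finset.card_range,
          nsmul_eq_mul]
      have hsum' : ∑ i ∈ Finset.range N, W' i ω =
          N * m - (∑ i ∈ Finset.range N, V i ω) := by
        simp only [hW', Finset.sum_sub_distrib, Finset.sum_const, Finset.card_range,
          nsmul_eq_mul]
      have habs : (N : ℝ) * t < |(∑ i ∈ Finset.range N, V i ω) - N * m| := by
        have : (∑ i ∈ Finset.range N, V i ω) / N - m =
            ((∑ i ∈ Finset.range N, V i ω) - N * m) / N := by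
          field_simp
        rw [this, abs_div, abs_of_pos hNR, lt_div_iff₀ hNR] at hω
        linarith [hω]
      rcases lt_abs.1 habs with h | h
      · left; rw [Set.mem_setOf_eq, hsum]; linarith
      · right; rw [Set.mem_setOf_eq, hsum']; linarith
  calc μ {ω | ¬ |(∑ i ∈ Finset.range N, V i ω) / N - m| ≤ t}
      ≤ μ ({ω | (N : ℝ) * t ≤ ∑ i ∈ Finset.range N, W i ω} ∪
          {ω | (N : ℝ) * t ≤ ∑ i ∈ Finset.range N, W' i ω}) := measure_mono hsubset
    _ ≤ μ {ω | (N : ℝ) * t ≤ ∑ i ∈ Finset.range N, W i ω} +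
        μ {ω | (N : ℝ) * t ≤ ∑ i ∈ Finset.range N, W' i ω} := measure_union_le _ _
    _ ≤ ENNReal.ofReal E + ENNReal.ofReal E := add_le_add hBj hB'j
    _ = ENNReal.ofReal (2 * E) := by
        rw [← ENNReal.ofReal_add (Real.exp_nonneg _) (Real.exp_nonneg _)]
        congr 1
        ring


set_option maxHeartbeats 1000000 in
/-- sample complexity of ratio estimation via Bernstein's inequality:
for i.i.d. bounded pairs `(X_i, Y_i)` with means `μX, μY ≠ 0`, variance bounds
`σX², σY²`, `|μX/μY| ≤ c'`, and `N ≥ 32 ln(4/δ) max{...}`, the ratio of sample means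
is `ε`-close to `μX/μY` with probability at least `1 − δ`. -/
theorem stmt_12 {Ω : Type*} [MeasurableSpace Ω] (μ : Measure Ω)
    [IsProbabilityMeasure μ]
    (Z : ℕ → Ω → ℝ × ℝ) (hmeas : ∀ i, Measurable (Z i))
    (hindep : iIndepFun Z μ)
    (hident : ∀ i, IdentDistrib (Z i) (Z 0) μ μ)
    (c c' μX μY σX σY ε δ : ℝ) (hc : 0 < c)
    (hXbd : ∀ ω, |(Z 0 ω).1| ≤ c) (hYbd : ∀ ω, |(Z 0 ω).2| ≤ c)
    (hμX : ∫ ω, (Z 0 ω).1 ∂μ = μX) (hμY : ∫ ω, (Z 0 ω).2 ∂μ = μY)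
    (hμY0 : μY ≠ 0)
    (hσX : variance (fun ω => (Z 0 ω).1) μ ≤ σX ^ 2)
    (hσY : variance (fun ω => (Z 0 ω).2) μ ≤ σY ^ 2)
    (hc' : |μX / μY| ≤ c')
    (hε : 0 < ε) (hε2 : ε ≤ 2 * c') (hδ : 0 < δ)
    (N : ℕ)
    (hN : 32 * Real.log (4 / δ) *
        max (σX ^ 2 / (μY ^ 2 * ε ^ 2) + c / (6 * |μY| * ε))
            (c' ^ 2 * σY ^ 2 / (μY ^ 2 * ε ^ 2) + c' * c / (6 * |μY| * ε)) ≤ (N : ℝ)) :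
    ENNReal.ofReal (1 - δ) ≤
      μ {ω | |((∑ i ∈ Finset.range N, (Z i ω).1) / N) /
              ((∑ i ∈ Finset.range N, (Z i ω).2) / N) - μX / μY| ≤ ε} := by
  rcases le_or_gt 1 δ with hδ1 | hδ1
  · have h0 : ENNReal.ofReal (1 - δ) = 0 := by
      rw [ENNReal.ofReal_eq_zero]; linarith
    rw [h0]; exact zero_le
  have hc'pos : 0 < c' := by linarith
  have hY0 : 0 < |μY| := abs_pos.2 hμY0
  have hlog : 0 < Real.log (4 / δ) := Real.log_pos (by rw [lt_div_iff₀ hδ]; linarith)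
  set t1 : ℝ := |μY| * ε / 4 with ht1
  set t2 : ℝ := |μY| * ε / (4 * c') with ht2
  have ht1p : 0 < t1 := div_pos (mul_pos hY0 hε) (by norm_num)
  have ht2p : 0 < t2 := div_pos (mul_pos hY0 hε) (by positivity)
  -- two-sided bounds for both coordinates
  have hTX : μ {ω | ¬ |(∑ i ∈ Finset.range N, (Z i ω).1) / (N : ℝ) - μX| ≤ t1} ≤
      ENNReal.ofReal (2 * Real.exp (-(N : ℝ) * t1 ^ 2 / (2 * σX ^ 2 + 2 * (2 * c) * t1 / 3))) :=
    aux_two_sided μ (fun i ω => (Z i ω).1)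
      (fun i => measurable_fst.comp (hmeas i))
      (hindep.comp (fun _ => Prod.fst) fun _ => measurable_fst)
      (fun i => (hident i).comp measurable_fst)
      c μX (σX ^ 2) t1 hc ht1p hXbd hμX hσX N
  have hTY : μ {ω | ¬ |(∑ i ∈ Finset.range N, (Z i ω).2) / (N : ℝ) - μY| ≤ t2} ≤
      ENNReal.ofReal (2 * Real.exp (-(N : ℝ) * t2 ^ 2 / (2 * σY ^ 2 + 2 * (2 * c) * t2 / 3))) :=
    aux_two_sided μ (fun i ω => (Z i ω).2)
      (fun i => measurable_snd.comp (hmeas i))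
      (hindep.comp (fun _ => Prod.snd) fun _ => measurable_snd)
      (fun i => (hident i).comp measurable_snd)
      c μY (σY ^ 2) t2 hc ht2p hYbd hμY hσY N
  -- numeric bounds on the exponentials
  have h32 : (0:ℝ) ≤ 32 * Real.log (4 / δ) := by positivity
  have hN1 : 32 * Real.log (4 / δ) * (σX ^ 2 / (μY ^ 2 * ε ^ 2) + c / (6 * |μY| * ε)) ≤ N :=
    le_trans (mul_le_mul_of_nonneg_left (le_max_left _ _) h32) hN
  have hN2 : 32 * Real.log (4 / δ) *
      (c' ^ 2 * σY ^ 2 / (μY ^ 2 * ε ^ 2) + c' * c / (6 * |μY| * ε)) ≤ N :=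
    le_trans (mul_le_mul_of_nonneg_left (le_max_right _ _) h32) hN
  have hexp_neg_log : Real.exp (-Real.log (4 / δ)) = δ / 4 := by
    rw [Real.exp_neg, Real.exp_log (div_pos (by norm_num) hδ), inv_div]
  have key1 : Real.exp (-(N : ℝ) * t1 ^ 2 / (2 * σX ^ 2 + 2 * (2 * c) * t1 / 3)) ≤ δ / 4 := by
    have hd1 : 0 < 2 * σX ^ 2 + 2 * (2 * c) * t1 / 3 := by
      nlinarith [sq_nonneg σX, mul_pos hc ht1p]
    have hid1 : 32 * (σX ^ 2 / (μY ^ 2 * ε ^ 2) + c / (6 * |μY| * ε)) * t1 ^ 2 =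
        2 * σX ^ 2 + 2 * (2 * c) * t1 / 3 := by
      rw [ht1, ← sq_abs μY]
      field_simp
      ring
    have h1 : Real.log (4 / δ) * (2 * σX ^ 2 + 2 * (2 * c) * t1 / 3) ≤ (N : ℝ) * t1 ^ 2 := by
      rw [← hid1]
      calc Real.log (4 / δ) * (32 * (σX ^ 2 / (μY ^ 2 * ε ^ 2) + c / (6 * |μY| * ε)) * t1 ^ 2)
          = (32 * Real.log (4 / δ) * (σX ^ 2 / (μY ^ 2 * ε ^ 2) + c / (6 * |μY| * ε))) * t1 ^ 2 := by
            ring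
        _ ≤ (N : ℝ) * t1 ^ 2 := mul_le_mul_of_nonneg_right hN1 (sq_nonneg t1)
    rw [← hexp_neg_log, Real.exp_le_exp]
    have h2 : Real.log (4 / δ) ≤ (N : ℝ) * t1 ^ 2 / (2 * σX ^ 2 + 2 * (2 * c) * t1 / 3) :=
      (le_div_iff₀ hd1).2 h1
    have heq : -(N : ℝ) * t1 ^ 2 / (2 * σX ^ 2 + 2 * (2 * c) * t1 / 3) =
        -((N : ℝ) * t1 ^ 2 / (2 * σX ^ 2 + 2 * (2 * c) * t1 / 3)) := by ring
    rw [heq]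
    linarith
  have key2 : Real.exp (-(N : ℝ) * t2 ^ 2 / (2 * σY ^ 2 + 2 * (2 * c) * t2 / 3)) ≤ δ / 4 := by
    have hd2 : 0 < 2 * σY ^ 2 + 2 * (2 * c) * t2 / 3 := by
      nlinarith [sq_nonneg σY, mul_pos hc ht2p]
    have hid2 : 32 * (c' ^ 2 * σY ^ 2 / (μY ^ 2 * ε ^ 2) + c' * c / (6 * |μY| * ε)) * t2 ^ 2 =
        2 * σY ^ 2 + 2 * (2 * c) * t2 / 3 := by
      rw [ht2, ← sq_abs μY]
      field_simp
      ring
    have h1 : Real.log (4 / δ) * (2 * σY ^ 2 + 2 * (2 * c) * t2 / 3) ≤ (N : ℝ) * t2 ^ 2 := by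
      rw [← hid2]
      calc Real.log (4 / δ) *
            (32 * (c' ^ 2 * σY ^ 2 / (μY ^ 2 * ε ^ 2) + c' * c / (6 * |μY| * ε)) * t2 ^ 2)
          = (32 * Real.log (4 / δ) *
              (c' ^ 2 * σY ^ 2 / (μY ^ 2 * ε ^ 2) + c' * c / (6 * |μY| * ε))) * t2 ^ 2 := by
            ring
        _ ≤ (N : ℝ) * t2 ^ 2 := mul_le_mul_of_nonneg_right hN2 (sq_nonneg t2)
    rw [← hexp_neg_log, Real.exp_le_exp]
    have h2 : Real.log (4 / δ) ≤ (N : ℝ) * t2 ^ 2 / (2 * σY ^ 2 + 2 * (2 * c) * t2 / 3) :=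
      (le_div_iff₀ hd2).2 h1
    have heq : -(N : ℝ) * t2 ^ 2 / (2 * σY ^ 2 + 2 * (2 * c) * t2 / 3) =
        -((N : ℝ) * t2 ^ 2 / (2 * σY ^ 2 + 2 * (2 * c) * t2 / 3)) := by ring
    rw [heq]
    linarith
  have hTX' : μ {ω | ¬ |(∑ i ∈ Finset.range N, (Z i ω).1) / (N : ℝ) - μX| ≤ t1} ≤
      ENNReal.ofReal (δ / 2) :=
    le_trans hTX (ENNReal.ofReal_le_ofReal (by linarith))
  have hTY' : μ {ω | ¬ |(∑ i ∈ Finset.range N, (Z i ω).2) / (N : ℝ) - μY| ≤ t2} ≤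
      ENNReal.ofReal (δ / 2) :=
    le_trans hTY (ENNReal.ofReal_le_ofReal (by linarith))
  -- the target event
  set T : Set Ω := {ω | |((∑ i ∈ Finset.range N, (Z i ω).1) / N) /
              ((∑ i ∈ Finset.range N, (Z i ω).2) / N) - μX / μY| ≤ ε} with hT
  have hTmeas : MeasurableSet T := by
    have hm1 : Measurable fun ω => ∑ i ∈ Finset.range N, (Z i ω).1 :=
      Finset.measurable_sum _ fun i _ => measurable_fst.comp (hmeas i)
    have hm2 : Measurable fun ω => ∑ i ∈ Finset.range N, (Z i ω).2 :=
      Finset.measurable_sum _ fun i _ => measurable_snd.comp (hmeas i)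
    rw [hT]
    exact measurableSet_le
      ((((hm1.div_const _).div (hm2.div_const _)).sub measurable_const).abs) measurable_const
  have hsub : Tᶜ ⊆ {ω | ¬ |(∑ i ∈ Finset.range N, (Z i ω).1) / (N : ℝ) - μX| ≤ t1} ∪
      {ω | ¬ |(∑ i ∈ Finset.range N, (Z i ω).2) / (N : ℝ) - μY| ≤ t2} := by
    intro ω hω
    by_contra hcon
    simp only [Set.mem_union, Set.mem_setOf_eq, not_or, not_not] at hcon
    obtain ⟨h1, h2⟩ := hcon
    apply hω
    simp only [hT, Set.mem_setOf_eq]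
    exact aux_ratio _ _ μX μY ε c' hμY0 hc' hε hε2 h1 h2
  have hcompl : μ Tᶜ ≤ ENNReal.ofReal δ := by
    calc μ Tᶜ ≤ μ ({ω | ¬ |(∑ i ∈ Finset.range N, (Z i ω).1) / (N : ℝ) - μX| ≤ t1} ∪
        {ω | ¬ |(∑ i ∈ Finset.range N, (Z i ω).2) / (N : ℝ) - μY| ≤ t2}) := measure_mono hsub
      _ ≤ μ {ω | ¬ |(∑ i ∈ Finset.range N, (Z i ω).1) / (N : ℝ) - μX| ≤ t1} +
          μ {ω | ¬ |(∑ i ∈ Finset.range N, (Z i ω).2) / (N : ℝ) - μY| ≤ t2} :=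
        measure_union_le _ _
      _ ≤ ENNReal.ofReal (δ / 2) + ENNReal.ofReal (δ / 2) := add_le_add hTX' hTY'
      _ = ENNReal.ofReal δ := by
          rw [← ENNReal.ofReal_add (by linarith) (by linarith)]
          norm_num
  refine (ENNReal.add_le_add_iff_right (a := ENNReal.ofReal δ) ENNReal.ofReal_ne_top).1 ?_
  calc ENNReal.ofReal (1 - δ) + ENNReal.ofReal δ = ENNReal.ofReal 1 := by
        rw [← ENNReal.ofReal_add (by linarith) hδ.le]
        norm_num
    _ = 1 := ENNReal.ofReal_one
    _ = μ T + μ Tᶜ := by rw [measure_add_measure_compl hTmeas, measure_univ]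
    _ ≤ μ T + ENNReal.ofReal δ := add_le_add_right hcompl _
end
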